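/- arXiv:2208.14329 — 5 statements merged into one kernel-verified Lean document; each statement's English description precedes it below -/
import Mathlib

section
/- In the point-treatment causal setup with censoring, the inverse probability weighting identification holds: E[1_{A=1} · 1_{C=0} · Y / (g_A · g_C)] = E[Y*], where Y* is the potential outcome under treatment and no censoring. -/
open MeasureTheory ProbabilityTheory

section AuxIPW
open Set


lemma aux_condexp_mul_indicator
    {Ω γ : Type*} [mΩ : MeasurableSpace Ω] [StandardBorelSpace Ω] [Nonempty Ω]
    [MeasurableSpace γ]
    (μ : Measure Ω) [IsProbabilityMeasure μ]
    (f : Ω → ℝ) (g : Ω → Bool) (hf : Measurable f) (hg : Measurable g)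
    (B : ℝ) (hB : ∀ ω, |f ω| ≤ B)
    (X : Ω → γ) (hX : Measurable X)
    (h : CondIndepFun (MeasurableSpace.comap X inferInstance) hX.comap_le f g μ) (b : Bool) :
    μ[fun ω => f ω * (if g ω = b then (1:ℝ) else 0) | MeasurableSpace.comap X inferInstance]
      =ᵐ[μ] fun ω => (μ[f| MeasurableSpace.comap X inferInstance]) ω
        * (μ[fun ω => if g ω = b then (1:ℝ) else 0| MeasurableSpace.comap X inferInstance]) ω := by
  have hm : MeasurableSpace.comap X inferInstance ≤ mΩ := hX.comap_le
  have hB0 : 0 ≤ B := (abs_nonneg _).trans (hB (Classical.arbitrary Ω))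
  set T : Set Ω := g ⁻¹' {b} with hT
  have hTm : MeasurableSet T := hg (measurableSet_singleton b)
  have hfi : Integrable f μ := ⟨hf.aestronglyMeasurable,
    HasFiniteIntegral.of_bounded (C := B) (Filter.Eventually.of_forall fun ω => by
      simpa [Real.norm_eq_abs] using hB ω)⟩
  have hfgi : Integrable (fun ω => f ω * (if g ω = b then (1:ℝ) else 0)) μ := by
    refine ⟨(hf.mul ((measurable_const.ite (hg (measurableSet_singleton b))
      measurable_const))).aestronglyMeasurable, HasFiniteIntegral.of_bounded (C := B)
      (Filter.Eventually.of_forall fun ω => ?_)⟩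
    by_cases hb : g ω = b
    · simpa [hb, Real.norm_eq_abs] using hB ω
    · simpa [hb, Real.norm_eq_abs] using hB0
  have hindi : Integrable (fun ω => if g ω = b then (1:ℝ) else 0) μ := by
    refine ⟨(measurable_const.ite (hg (measurableSet_singleton b))
      measurable_const).aestronglyMeasurable, HasFiniteIntegral.of_bounded (C := 1)
      (Filter.Eventually.of_forall fun ω => ?_)⟩
    by_cases hb : g ω = b <;> simp [hb]
  have hk : ∀ᵐ ω ∂μ, ∀ q : ℚ,
      condExpKernel μ (MeasurableSpace.comap X inferInstance) ω (f ⁻¹' Iio (q:ℝ) ∩ T)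
      = condExpKernel μ (MeasurableSpace.comap X inferInstance) ω (f ⁻¹' Iio (q:ℝ))
        * condExpKernel μ (MeasurableSpace.comap X inferInstance) ω T := by
    rw [ae_all_iff]
    intro q
    exact ae_of_ae_trim hm (Kernel.indepFun_iff_measure_inter_preimage_eq_mul.mp h _ _
      measurableSet_Iio (measurableSet_singleton b))
  have hc1 := condExp_ae_eq_integral_condExpKernel hm hfgi
  have hc2 := condExp_ae_eq_integral_condExpKernel hm hfi
  have hc3 := condExp_ae_eq_integral_condExpKernel hm hindi
  filter_upwards [hk, hc1, hc2, hc3] with ω hω h1 h2 h3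
  rw [h1, h2, h3]
  set ν := condExpKernel μ (MeasurableSpace.comap X inferInstance) ω with hν
  have hprob : IsProbabilityMeasure ν := inferInstance
  have hmap : (ν.restrict T).map f = ν T • ν.map f := by
    refine ext_of_generate_finite _
      ((BorelSpace.measurable_eq (α := ℝ)).trans Real.borel_eq_generateFrom_Iio_rat)
      Real.isPiSystem_Iio_rat ?_ ?_
    · rintro s hs
      simp only [Set.mem_iUnion, Set.mem_singleton_iff] at hs
      obtain ⟨q, rfl⟩ := hs
      rw [Measure.map_apply hf measurableSet_Iio, Measure.restrict_apply (hf measurableSet_Iio),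
        Measure.smul_apply, Measure.map_apply hf measurableSet_Iio, smul_eq_mul, hω q, mul_comm]
    · rw [Measure.map_apply hf MeasurableSet.univ, Set.preimage_univ, Measure.restrict_apply_univ,
        Measure.smul_apply, Measure.map_apply hf MeasurableSet.univ, Set.preimage_univ,
        smul_eq_mul, measure_univ, mul_one]
  have hTone : ∫ y, (if g y = b then (1:ℝ) else 0) ∂ν = (ν T).toReal := by
    rw [show (fun y => if g y = b then (1:ℝ) else 0) = T.indicator (1 : Ω → ℝ) by
      funext y; by_cases hy : g y = b <;> simp [T, Set.indicator_apply, hy]]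
    exact integral_indicator_one hTm
  calc ∫ y, f y * (if g y = b then (1:ℝ) else 0) ∂ν
      = ∫ y, T.indicator f y ∂ν := by
        refine integral_congr_ae (Filter.Eventually.of_forall fun y => ?_)
        by_cases hy : g y = b <;> simp [T, Set.indicator_apply, hy]
    _ = ∫ y in T, f y ∂ν := integral_indicator hTm
    _ = ∫ x, x ∂((ν.restrict T).map f) := (integral_map hf.aemeasurable aestronglyMeasurable_id).symm
    _ = ∫ x, x ∂(ν T • ν.map f) := by rw [hmap]
    _ = (ν T).toReal * ∫ x, x ∂(ν.map f) := by rw [integral_smul_measure, smul_eq_mul]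
    _ = (ν T).toReal * ∫ y, f y ∂ν := by congr 1; exact integral_map hf.aemeasurable aestronglyMeasurable_id
    _ = (∫ y, f y ∂ν) * ∫ y, (if g y = b then (1:ℝ) else 0) ∂ν := by rw [hTone]; ring

lemma aux_int_of_bdd {Ω : Type*} [MeasurableSpace Ω] (P : Measure Ω) [IsFiniteMeasure P]
    (f : Ω → ℝ) (hf : Measurable f) (c : ℝ) (hc : ∀ᵐ ω ∂P, |f ω| ≤ c) : Integrable f P :=
  ⟨hf.aestronglyMeasurable, HasFiniteIntegral.of_bounded (C := c)
    (hc.mono fun ω h => by simpa [Real.norm_eq_abs] using h)⟩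


end AuxIPW

/-- Single-time-period inverse probability weighting identification with censoring:
`E[1_{A=1} · 1_{C=0} · Y / (g_A · g_C)] = E[Y*]`. -/
theorem ipw_identification_with_censoring
    {Ω S : Type*} [MeasurableSpace Ω] [StandardBorelSpace Ω] [Nonempty Ω]
    [MeasurableSpace S] [StandardBorelSpace S]
    (P : Measure Ω) [IsProbabilityMeasure P]
    (L : Ω → S) (hL : Measurable L)
    (A : Ω → Bool) (hA : Measurable A)
    (C : Ω → Bool) (hC : Measurable C)
    (Y Ystar : Ω → ℝ) (hY : Measurable Y) (hYstar : Measurable Ystar)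
    (hYbdd : ∃ B : ℝ, ∀ᵐ ω ∂P, |Y ω| ≤ B)
    (hYstarbdd : ∃ B : ℝ, ∀ᵐ ω ∂P, |Ystar ω| ≤ B)
    -- consistency: Y = Y* a.s. on {A = 1, C = 0}
    (hcons : ∀ᵐ ω ∂P, A ω = true → C ω = false → Y ω = Ystar ω)
    -- exchangeability: Y* ⫫ A | σ(L) and Y* ⫫ C | σ(L, A)
    (hexchA : CondIndepFun (MeasurableSpace.comap L inferInstance) hL.comap_le Ystar A P)
    (hexchC : CondIndepFun (MeasurableSpace.comap (fun ω => (L ω, A ω)) inferInstance)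
      (hL.prodMk hA).comap_le Ystar C P)
    -- propensities: g_A is a version of E[1_{A=1} | σ(L)],
    -- g_C a version of E[1_{C=0} | σ(L, A)]
    (gA gC : Ω → ℝ)
    (hgA : gA =ᵐ[P]
      P[(fun ω => if A ω then (1 : ℝ) else 0) | MeasurableSpace.comap L inferInstance])
    (hgC : gC =ᵐ[P]
      P[(fun ω => if C ω then (0 : ℝ) else 1) |
        MeasurableSpace.comap (fun ω => (L ω, A ω)) inferInstance])
    -- positivity
    (η : ℝ) (hη : 0 < η) (hposA : ∀ᵐ ω ∂P, η ≤ gA ω) (hposC : ∀ᵐ ω ∂P, η ≤ gC ω) :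
    ∫ ω, (if A ω then (1 : ℝ) else 0) * (if C ω then (0 : ℝ) else 1) * Y ω / (gA ω * gC ω) ∂P
      = ∫ ω, Ystar ω ∂P := by
  open Set in
  have hm1 : MeasurableSpace.comap L inferInstance ≤ ‹MeasurableSpace Ω› := hL.comap_le
  have hm2 : MeasurableSpace.comap (fun ω => (L ω, A ω)) inferInstance ≤ ‹MeasurableSpace Ω› :=
    (hL.prodMk hA).comap_le
  have h12 : MeasurableSpace.comap L inferInstance
      ≤ MeasurableSpace.comap (fun ω => (L ω, A ω)) inferInstance := by
    rintro s ⟨t, ht, rfl⟩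
    exact ⟨t ×ˢ Set.univ, ht.prod MeasurableSet.univ, by ext ω; simp⟩
  -- truncation of Ystar
  obtain ⟨B0, hB0⟩ := hYstarbdd
  set B : ℝ := max B0 0 with hBdef
  have hBnn : 0 ≤ B := le_max_right _ _
  have hYB : ∀ᵐ ω ∂P, |Ystar ω| ≤ B := hB0.mono fun ω h => h.trans (le_max_left _ _)
  set clip : ℝ → ℝ := fun x => max (-B) (min x B) with hclipdef
  have hclip_meas : Measurable clip := by measurability
  set Z : Ω → ℝ := clip ∘ Ystar with hZdef
  have hZmeas : Measurable Z := hclip_meas.comp hYstar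
  have hZbd : ∀ ω, |Z ω| ≤ B := by
    intro ω
    rw [abs_le]
    constructor
    · exact le_max_left (-B) (min (Ystar ω) B)
    · exact max_le (neg_le_self hBnn) (min_le_right _ _)
  have hZae : Z =ᵐ[P] Ystar := by
    filter_upwards [hYB] with ω h
    have h' := abs_le.mp h
    simp only [Z, clip, Function.comp_apply]
    rw [min_eq_left h'.2, max_eq_right h'.1]
  -- conditional independence transferred to the truncation Z
  have hCr : CondIndepFun (MeasurableSpace.comap (fun ω => (L ω, A ω)) inferInstance)
      (hL.prodMk hA).comap_le Z C P := hexchC.comp hclip_meas measurable_id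
  have hAr : CondIndepFun (MeasurableSpace.comap L inferInstance) hL.comap_le Z A P :=
    hexchA.comp hclip_meas measurable_id
  -- key factorizations
  have hk2 := aux_condexp_mul_indicator P Z C hZmeas hC B hZbd _ (hL.prodMk hA) hCr false
  have hk1 := aux_condexp_mul_indicator P Z A hZmeas hA B hZbd L hL hAr true
  -- indicator functions
  have hCfun : (fun ω => if C ω then (0:ℝ) else 1) = (fun ω => if C ω = false then (1:ℝ) else 0) := by
    funext ω; cases hc : C ω <;> simp [hc]
  rw [hCfun] at hgC
  have hIAf_meas : Measurable (fun ω => if A ω = true then (1:ℝ) else 0) :=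
    measurable_const.ite (hA (measurableSet_singleton true)) measurable_const
  have hICf_meas : Measurable (fun ω => if C ω = false then (1:ℝ) else 0) :=
    measurable_const.ite (hC (measurableSet_singleton false)) measurable_const
  have hIAbd : ∀ ω, |if A ω = true then (1:ℝ) else 0| ≤ 1 := by
    intro ω; split <;> norm_num
  have hICbd : ∀ ω, |if C ω = false then (1:ℝ) else 0| ≤ 1 := by
    intro ω; split <;> norm_num
  -- conditional propensities (canonical versions)
  have hGA_sm : StronglyMeasurable[MeasurableSpace.comap L inferInstance]
      (P[fun ω => if A ω = true then (1:ℝ) else 0 | MeasurableSpace.comap L inferInstance]) :=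
    stronglyMeasurable_condExp
  have hGC_sm : StronglyMeasurable[MeasurableSpace.comap (fun ω => (L ω, A ω)) inferInstance]
      (P[fun ω => if C ω = false then (1:ℝ) else 0 |
        MeasurableSpace.comap (fun ω => (L ω, A ω)) inferInstance]) :=
    stronglyMeasurable_condExp
  have hGA_pos : ∀ᵐ ω ∂P, η ≤ (P[fun ω => if A ω = true then (1:ℝ) else 0 |
      MeasurableSpace.comap L inferInstance]) ω := by
    filter_upwards [hposA, hgA] with ω h1 h2
    rw [← h2]; exact h1
  have hGC_pos : ∀ᵐ ω ∂P, η ≤ (P[fun ω => if C ω = false then (1:ℝ) else 0 |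
      MeasurableSpace.comap (fun ω => (L ω, A ω)) inferInstance]) ω := by
    filter_upwards [hposC, hgC] with ω h1 h2
    rw [← h2]; exact h1
  -- bridging the `if A ω` spelling
  have hsameA : (fun ω => if A ω then (1:ℝ) else 0) = (fun ω' => if A ω' = true then (1:ℝ) else 0) := rfl
  have hsameC : (fun ω => if C ω = false then (1:ℝ) else 0) = (fun ω' => if C ω' = false then (1:ℝ) else 0) := rfl
  rw [hsameA] at hgA
  rw [hsameC] at hgC
  -- measurability
  have hIAf_meas : Measurable (fun ω' => if A ω' = true then (1:ℝ) else 0) :=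
    measurable_const.ite (hA (measurableSet_singleton true)) measurable_const
  have hICf_meas : Measurable (fun ω' => if C ω' = false then (1:ℝ) else 0) :=
    measurable_const.ite (hC (measurableSet_singleton false)) measurable_const
  have hIAbd : ∀ ω, |if A ω = true then (1:ℝ) else 0| ≤ 1 := by
    intro ω; split <;> norm_num
  have hICbd : ∀ ω, |if C ω = false then (1:ℝ) else 0| ≤ 1 := by
    intro ω; split <;> norm_num
  have hGA_sm : StronglyMeasurable[(MeasurableSpace.comap L inferInstance)] (P[(fun ω' => if A ω' = true then (1:ℝ) else 0)|(MeasurableSpace.comap L inferInstance)]) := stronglyMeasurable_condExp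
  have hGC_sm : StronglyMeasurable[(MeasurableSpace.comap (fun ω => (L ω, A ω)) inferInstance)] (P[(fun ω' => if C ω' = false then (1:ℝ) else 0)|(MeasurableSpace.comap (fun ω => (L ω, A ω)) inferInstance)]) := stronglyMeasurable_condExp
  have hGA_meas : Measurable (P[(fun ω' => if A ω' = true then (1:ℝ) else 0)|(MeasurableSpace.comap L inferInstance)]) := (hGA_sm.mono hm1).measurable
  have hGC_meas : Measurable (P[(fun ω' => if C ω' = false then (1:ℝ) else 0)|(MeasurableSpace.comap (fun ω => (L ω, A ω)) inferInstance)]) := (hGC_sm.mono hm2).measurable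
  have hpair : Measurable[(MeasurableSpace.comap (fun ω => (L ω, A ω)) inferInstance)] (fun ω => (L ω, A ω)) := Measurable.of_comap_le le_rfl
  have hA2 : Measurable[(MeasurableSpace.comap (fun ω => (L ω, A ω)) inferInstance)] A := measurable_snd.comp hpair
  have hIA_sm2 : StronglyMeasurable[(MeasurableSpace.comap (fun ω => (L ω, A ω)) inferInstance)] (fun ω' => if A ω' = true then (1:ℝ) else 0) :=
    (measurable_const.ite (hA2 (measurableSet_singleton true))
      measurable_const).stronglyMeasurable
  -- positivity of canonical propensities
  have hGA_pos : ∀ᵐ ω ∂P, η ≤ (P[(fun ω' => if A ω' = true then (1:ℝ) else 0)|(MeasurableSpace.comap L inferInstance)]) ω := by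
    filter_upwards [hposA, hgA] with ω h1 h2
    rw [← h2]; exact h1
  have hGC_pos : ∀ᵐ ω ∂P, η ≤ (P[(fun ω' => if C ω' = false then (1:ℝ) else 0)|(MeasurableSpace.comap (fun ω => (L ω, A ω)) inferInstance)]) ω := by
    filter_upwards [hposC, hgC] with ω h1 h2
    rw [← h2]; exact h1
  -- weight functions: strong measurability and bounds
  have hu_sm : StronglyMeasurable[(MeasurableSpace.comap (fun ω => (L ω, A ω)) inferInstance)] (fun ω => (if A ω = true then (1:ℝ) else 0) / ((P[(fun ω' => if A ω' = true then (1:ℝ) else 0)|(MeasurableSpace.comap L inferInstance)]) ω * (P[(fun ω' => if C ω' = false then (1:ℝ) else 0)|(MeasurableSpace.comap (fun ω => (L ω, A ω)) inferInstance)]) ω)) :=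
    (((measurable_const.ite (hA2 (measurableSet_singleton true)) measurable_const)).div
      (((hGA_sm.measurable).mono h12 le_rfl).mul hGC_sm.measurable)).stronglyMeasurable
  have hv_sm : StronglyMeasurable[(MeasurableSpace.comap (fun ω => (L ω, A ω)) inferInstance)] (fun ω => (if A ω = true then (1:ℝ) else 0) / (P[(fun ω' => if A ω' = true then (1:ℝ) else 0)|(MeasurableSpace.comap L inferInstance)]) ω) :=
    (((measurable_const.ite (hA2 (measurableSet_singleton true)) measurable_const)).div
      ((hGA_sm.measurable).mono h12 le_rfl)).stronglyMeasurable
  have hw_sm : StronglyMeasurable[(MeasurableSpace.comap L inferInstance)] (fun ω => ((P[(fun ω' => if A ω' = true then (1:ℝ) else 0)|(MeasurableSpace.comap L inferInstance)]) ω)⁻¹) := (hGA_sm.measurable.inv).stronglyMeasurable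
  have hu_bd : ∀ᵐ ω ∂P, ‖(if A ω = true then (1:ℝ) else 0) / ((P[(fun ω' => if A ω' = true then (1:ℝ) else 0)|(MeasurableSpace.comap L inferInstance)]) ω * (P[(fun ω' => if C ω' = false then (1:ℝ) else 0)|(MeasurableSpace.comap (fun ω => (L ω, A ω)) inferInstance)]) ω)‖ ≤ 1/(η*η) := by
    filter_upwards [hGA_pos, hGC_pos] with ω h1 h2
    have hx : (0:ℝ) < (P[(fun ω' => if A ω' = true then (1:ℝ) else 0)|(MeasurableSpace.comap L inferInstance)]) ω * (P[(fun ω' => if C ω' = false then (1:ℝ) else 0)|(MeasurableSpace.comap (fun ω => (L ω, A ω)) inferInstance)]) ω := mul_pos (hη.trans_le h1) (hη.trans_le h2)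
    rw [Real.norm_eq_abs, abs_div, abs_of_pos hx]
    exact div_le_div₀ zero_le_one (hIAbd ω) (mul_pos hη hη) (mul_le_mul h1 h2 hη.le (hη.le.trans h1))
  have hv_bd : ∀ᵐ ω ∂P, ‖(if A ω = true then (1:ℝ) else 0) / (P[(fun ω' => if A ω' = true then (1:ℝ) else 0)|(MeasurableSpace.comap L inferInstance)]) ω‖ ≤ 1/η := by
    filter_upwards [hGA_pos] with ω h1
    rw [Real.norm_eq_abs, abs_div, abs_of_pos (hη.trans_le h1)]
    exact div_le_div₀ zero_le_one (hIAbd ω) hη h1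
  have hw_bd : ∀ᵐ ω ∂P, ‖((P[(fun ω' => if A ω' = true then (1:ℝ) else 0)|(MeasurableSpace.comap L inferInstance)]) ω)⁻¹‖ ≤ 1/η := by
    filter_upwards [hGA_pos] with ω h1
    rw [Real.norm_eq_abs, abs_inv, abs_of_pos (hη.trans_le h1), one_div]
    exact inv_anti₀ hη h1
  -- integrability
  have iZ : Integrable Z P := aux_int_of_bdd P Z hZmeas B (Filter.Eventually.of_forall hZbd)
  have hvCbd : ∀ ω, |Z ω * (if C ω = false then (1:ℝ) else 0)| ≤ B := by
    intro ω
    rw [abs_mul]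
    simpa using mul_le_mul (hZbd ω) (hICbd ω) (abs_nonneg _) hBnn
  have hvAbd : ∀ ω, |Z ω * (if A ω = true then (1:ℝ) else 0)| ≤ B := by
    intro ω
    rw [abs_mul]
    simpa using mul_le_mul (hZbd ω) (hIAbd ω) (abs_nonneg _) hBnn
  have ivC : Integrable (fun ω => Z ω * (if C ω = false then (1:ℝ) else 0)) P :=
    aux_int_of_bdd P _ (hZmeas.mul hICf_meas) B (Filter.Eventually.of_forall hvCbd)
  have ivA : Integrable (fun ω => Z ω * (if A ω = true then (1:ℝ) else 0)) P :=
    aux_int_of_bdd P _ (hZmeas.mul hIAf_meas) B (Filter.Eventually.of_forall hvAbd)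
  have iuvC : Integrable (fun ω => ((if A ω = true then (1:ℝ) else 0) / ((P[(fun ω' => if A ω' = true then (1:ℝ) else 0)|(MeasurableSpace.comap L inferInstance)]) ω * (P[(fun ω' => if C ω' = false then (1:ℝ) else 0)|(MeasurableSpace.comap (fun ω => (L ω, A ω)) inferInstance)]) ω))
      * (Z ω * (if C ω = false then (1:ℝ) else 0))) P := by
    refine aux_int_of_bdd P _ ((hIAf_meas.div (hGA_meas.mul hGC_meas)).mul
      (hZmeas.mul hICf_meas)) ((1/(η*η))*B) ?_
    filter_upwards [hu_bd] with ω h1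
    rw [abs_mul]
    exact mul_le_mul (by simpa only [Real.norm_eq_abs] using h1) (hvCbd ω) (abs_nonneg _)
      (by positivity)
  have ivZ : Integrable (fun ω => ((if A ω = true then (1:ℝ) else 0) / (P[(fun ω' => if A ω' = true then (1:ℝ) else 0)|(MeasurableSpace.comap L inferInstance)]) ω) * Z ω) P := by
    refine aux_int_of_bdd P _ ((hIAf_meas.div hGA_meas).mul hZmeas) ((1/η)*B) ?_
    filter_upwards [hv_bd] with ω h1
    rw [abs_mul]
    exact mul_le_mul (by simpa only [Real.norm_eq_abs] using h1) (hZbd ω) (abs_nonneg _)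
      (by positivity)
  have iwvA : Integrable (fun ω => ((P[(fun ω' => if A ω' = true then (1:ℝ) else 0)|(MeasurableSpace.comap L inferInstance)]) ω)⁻¹ * (Z ω * (if A ω = true then (1:ℝ) else 0))) P := by
    refine aux_int_of_bdd P _ (hGA_meas.inv.mul (hZmeas.mul hIAf_meas)) ((1/η)*B) ?_
    filter_upwards [hw_bd] with ω h1
    rw [abs_mul]
    exact mul_le_mul (by simpa only [Real.norm_eq_abs] using h1) (hvAbd ω) (abs_nonneg _)
      (by positivity)
  -- pull-out properties
  have hpull_u := condExp_stronglyMeasurable_mul_of_bound hm2 hu_sm ivC (1/(η*η)) hu_bd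
  have hpull_v := condExp_stronglyMeasurable_mul_of_bound hm2 hv_sm iZ (1/η) hv_bd
  have hpull_w := condExp_stronglyMeasurable_mul_of_bound hm1 hw_sm ivA (1/η) hw_bd
  -- the chain of identities
  calc ∫ ω, (if A ω then (1 : ℝ) else 0) * (if C ω then (0 : ℝ) else 1) * Y ω / (gA ω * gC ω) ∂P
      = ∫ ω, ((if A ω = true then (1:ℝ) else 0) / ((P[(fun ω' => if A ω' = true then (1:ℝ) else 0)|(MeasurableSpace.comap L inferInstance)]) ω * (P[(fun ω' => if C ω' = false then (1:ℝ) else 0)|(MeasurableSpace.comap (fun ω => (L ω, A ω)) inferInstance)]) ω))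
          * (Z ω * (if C ω = false then (1:ℝ) else 0)) ∂P := by
        refine integral_congr_ae ?_
        filter_upwards [hcons, hZae, hgA, hgC] with ω h1 h2 h3 h4
        cases hA' : A ω
        · simp [hA']
        · cases hC' : C ω
          · have hY' : Y ω = Z ω := (h1 hA' hC').trans h2.symm
            simp only [hA', hC', if_true, if_false, hY', h3, h4]
            norm_num
            ring
          · simp [hA', hC']
    _ = ∫ ω, (P[fun ω => ((if A ω = true then (1:ℝ) else 0) / ((P[(fun ω' => if A ω' = true then (1:ℝ) else 0)|(MeasurableSpace.comap L inferInstance)]) ω * (P[(fun ω' => if C ω' = false then (1:ℝ) else 0)|(MeasurableSpace.comap (fun ω => (L ω, A ω)) inferInstance)]) ω))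
          * (Z ω * (if C ω = false then (1:ℝ) else 0))|(MeasurableSpace.comap (fun ω => (L ω, A ω)) inferInstance)]) ω ∂P :=
        (integral_condExp hm2).symm
    _ = ∫ ω, ((if A ω = true then (1:ℝ) else 0) / ((P[(fun ω' => if A ω' = true then (1:ℝ) else 0)|(MeasurableSpace.comap L inferInstance)]) ω * (P[(fun ω' => if C ω' = false then (1:ℝ) else 0)|(MeasurableSpace.comap (fun ω => (L ω, A ω)) inferInstance)]) ω))
          * (P[fun ω => Z ω * (if C ω = false then (1:ℝ) else 0)|(MeasurableSpace.comap (fun ω => (L ω, A ω)) inferInstance)]) ω ∂P :=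
        integral_congr_ae hpull_u
    _ = ∫ ω, ((if A ω = true then (1:ℝ) else 0) / (P[(fun ω' => if A ω' = true then (1:ℝ) else 0)|(MeasurableSpace.comap L inferInstance)]) ω) * (P[Z|(MeasurableSpace.comap (fun ω => (L ω, A ω)) inferInstance)]) ω ∂P := by
        refine integral_congr_ae ?_
        filter_upwards [hk2, hGC_pos] with ω h1 h2
        have hy : (P[(fun ω' => if C ω' = false then (1:ℝ) else 0)|(MeasurableSpace.comap (fun ω => (L ω, A ω)) inferInstance)]) ω ≠ 0 := ne_of_gt (hη.trans_le h2)
        show ((if A ω = true then (1:ℝ) else 0) / ((P[(fun ω' => if A ω' = true then (1:ℝ) else 0)|(MeasurableSpace.comap L inferInstance)]) ω * (P[(fun ω' => if C ω' = false then (1:ℝ) else 0)|(MeasurableSpace.comap (fun ω => (L ω, A ω)) inferInstance)]) ω))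
            * (P[fun ω => Z ω * (if C ω = false then (1:ℝ) else 0)|(MeasurableSpace.comap (fun ω => (L ω, A ω)) inferInstance)]) ω
          = ((if A ω = true then (1:ℝ) else 0) / (P[(fun ω' => if A ω' = true then (1:ℝ) else 0)|(MeasurableSpace.comap L inferInstance)]) ω) * (P[Z|(MeasurableSpace.comap (fun ω => (L ω, A ω)) inferInstance)]) ω
        rw [h1]
        rcases eq_or_ne ((P[(fun ω' => if A ω' = true then (1:ℝ) else 0)|(MeasurableSpace.comap L inferInstance)]) ω) 0 with hx | hx
        · simp [hx]
        · field_simp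
    _ = ∫ ω, (P[fun ω => ((if A ω = true then (1:ℝ) else 0) / (P[(fun ω' => if A ω' = true then (1:ℝ) else 0)|(MeasurableSpace.comap L inferInstance)]) ω) * Z ω|(MeasurableSpace.comap (fun ω => (L ω, A ω)) inferInstance)]) ω ∂P :=
        (integral_congr_ae hpull_v).symm
    _ = ∫ ω, ((if A ω = true then (1:ℝ) else 0) / (P[(fun ω' => if A ω' = true then (1:ℝ) else 0)|(MeasurableSpace.comap L inferInstance)]) ω) * Z ω ∂P := integral_condExp hm2
    _ = ∫ ω, ((P[(fun ω' => if A ω' = true then (1:ℝ) else 0)|(MeasurableSpace.comap L inferInstance)]) ω)⁻¹ * (Z ω * (if A ω = true then (1:ℝ) else 0)) ∂P := by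
        refine integral_congr_ae (Filter.Eventually.of_forall fun ω => ?_)
        ring
    _ = ∫ ω, (P[fun ω => ((P[(fun ω' => if A ω' = true then (1:ℝ) else 0)|(MeasurableSpace.comap L inferInstance)]) ω)⁻¹ * (Z ω * (if A ω = true then (1:ℝ) else 0))|(MeasurableSpace.comap L inferInstance)]) ω ∂P :=
        (integral_condExp hm1).symm
    _ = ∫ ω, ((P[(fun ω' => if A ω' = true then (1:ℝ) else 0)|(MeasurableSpace.comap L inferInstance)]) ω)⁻¹ * (P[fun ω => Z ω * (if A ω = true then (1:ℝ) else 0)|(MeasurableSpace.comap L inferInstance)]) ω ∂P :=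
        integral_congr_ae hpull_w
    _ = ∫ ω, (P[Z|(MeasurableSpace.comap L inferInstance)]) ω ∂P := by
        refine integral_congr_ae ?_
        filter_upwards [hk1, hGA_pos] with ω h1 h2
        have hx : (P[(fun ω' => if A ω' = true then (1:ℝ) else 0)|(MeasurableSpace.comap L inferInstance)]) ω ≠ 0 := ne_of_gt (hη.trans_le h2)
        show ((P[(fun ω' => if A ω' = true then (1:ℝ) else 0)|(MeasurableSpace.comap L inferInstance)]) ω)⁻¹ * (P[fun ω => Z ω * (if A ω = true then (1:ℝ) else 0)|(MeasurableSpace.comap L inferInstance)]) ω = (P[Z|(MeasurableSpace.comap L inferInstance)]) ω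
        rw [h1]
        field_simp
    _ = ∫ ω, Z ω ∂P := integral_condExp hm1
    _ = ∫ ω, Ystar ω ∂P := integral_congr_ae hZae
end

section
/- In the point-treatment causal setup, for any measurable subset w of S with P(L ∈ w) > 0, the subgroup-specific potential outcome mean is identified by the ratio of inverse probability weighted expectations: E[Y¹ | L ∈ w] = E[1_{L∈w} · 1_{A=1} · Y / e] / E[1_{L∈w} · 1_{A=1} / e]. -/
open MeasureTheory ProbabilityTheory

lemma ipw_aux_bdd_integrable {Ω : Type*} [MeasurableSpace Ω] {P : Measure Ω} [IsFiniteMeasure P]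
    {f : Ω → ℝ} {C : ℝ} (hm : AEStronglyMeasurable f P) (hb : ∀ᵐ ω ∂P, |f ω| ≤ C) :
    Integrable f P :=
  (integrable_const C).mono' hm
    (by filter_upwards [hb] with ω h using by simpa [Real.norm_eq_abs] using h)

lemma ipw_zero {Ω S : Type*} [mΩ : MeasurableSpace Ω] [StandardBorelSpace Ω] [Nonempty Ω]
    [MeasurableSpace S]
    (P : Measure Ω) [IsProbabilityMeasure P]
    {L : Ω → S} (hL : Measurable L)
    {Y1 : Ω → ℝ} (hY1 : Measurable Y1)
    {A : Ω → Bool} (hA : Measurable A)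
    (hexch : CondIndepFun (MeasurableSpace.comap L inferInstance) hL.comap_le Y1 A P) :
    ∀ s, MeasurableSet[MeasurableSpace.comap L inferInstance
        ⊔ MeasurableSpace.comap Y1 inferInstance] s →
      ∫ ω in s, ((A ⁻¹' {true}).indicator (fun _ => (1:ℝ)) ω
        - (P[(A ⁻¹' {true}).indicator (fun _ => (1:ℝ)) | MeasurableSpace.comap L inferInstance]) ω)
        ∂P = 0 := by
  have hG : MeasurableSpace.comap L inferInstance ≤ mΩ := hL.comap_le
  have hTmeas : MeasurableSet (A ⁻¹' {true}) := hA (measurableSet_singleton true)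
  set iT : Ω → ℝ := (A ⁻¹' {true}).indicator (fun _ => 1) with hiTdef
  set e' : Ω → ℝ := P[iT | MeasurableSpace.comap L inferInstance] with he'def
  have hm : MeasurableSpace.comap L inferInstance ⊔ MeasurableSpace.comap Y1 inferInstance ≤ mΩ :=
    sup_le hG hY1.comap_le
  have hiT_int : Integrable iT P := (integrable_const (1:ℝ)).indicator hTmeas
  have he'_int : Integrable e' P := integrable_condExp
  have hh_int : Integrable (fun ω => iT ω - e' ω) P := hiT_int.sub he'_int
  have h_pi : IsPiSystem
      {s : Set Ω | ∃ t v, MeasurableSet[MeasurableSpace.comap L inferInstance] t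
        ∧ MeasurableSet v ∧ s = t ∩ Y1 ⁻¹' v} := by
    rintro s1 ⟨t1, v1, ht1, hv1, rfl⟩ s2 ⟨t2, v2, ht2, hv2, rfl⟩ -
    exact ⟨t1 ∩ t2, v1 ∩ v2, ht1.inter ht2, hv1.inter hv2, by
      rw [Set.preimage_inter, Set.inter_inter_inter_comm]⟩
  have h_gen : MeasurableSpace.comap L inferInstance ⊔ MeasurableSpace.comap Y1 inferInstance
      = MeasurableSpace.generateFrom
        {s : Set Ω | ∃ t v, MeasurableSet[MeasurableSpace.comap L inferInstance] t
          ∧ MeasurableSet v ∧ s = t ∩ Y1 ⁻¹' v} := by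
    refine le_antisymm (sup_le ?_ ?_) (MeasurableSpace.generateFrom_le ?_)
    · exact fun t ht => MeasurableSpace.measurableSet_generateFrom
        ⟨t, Set.univ, ht, MeasurableSet.univ, by simp⟩
    · rintro u ⟨v, hv, rfl⟩
      exact MeasurableSpace.measurableSet_generateFrom
        ⟨Set.univ, v, MeasurableSet.univ, hv, (Set.univ_inter _).symm⟩
    · rintro s ⟨t, v, ht, hv, rfl⟩
      refine MeasurableSet.inter ?_ ?_
      · exact (le_sup_left : MeasurableSpace.comap L inferInstance ≤ _) t ht
      · exact (le_sup_right : MeasurableSpace.comap Y1 inferInstance ≤ _) _ ⟨v, hv, rfl⟩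
  intro s hs
  refine MeasurableSpace.induction_on_inter
    (C := fun s _ => ∫ ω in s, (iT ω - e' ω) ∂P = 0)
    (m := MeasurableSpace.comap L inferInstance ⊔ MeasurableSpace.comap Y1 inferInstance)
    h_gen h_pi ?_ ?_ ?_ ?_ s hs
  · simp
  · rintro s ⟨t, v, htG, hv, rfl⟩
    have htmeas : MeasurableSet t := hG t htG
    have hvmeas : MeasurableSet (Y1 ⁻¹' v) := hY1 hv
    set iU : Ω → ℝ := (Y1 ⁻¹' v).indicator (fun _ => 1) with hiUdef
    have hiU_int : Integrable iU P := (integrable_const (1:ℝ)).indicator hvmeas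
    have hprod : iU * iT = (Y1 ⁻¹' v ∩ A ⁻¹' {true}).indicator (fun _ => (1:ℝ)) := by
      funext ω
      by_cases h1 : ω ∈ Y1 ⁻¹' v <;> by_cases h2 : ω ∈ A ⁻¹' {true} <;>
        simp [hiUdef, hiTdef, Set.indicator_apply, h1, h2, Set.mem_inter_iff]
    have hUT_int : Integrable (iU * iT) P := by
      rw [hprod]; exact (integrable_const (1:ℝ)).indicator (hvmeas.inter hTmeas)
    have hUe_int : Integrable (e' * iU) P := by
      refine he'_int.abs.mono' (he'_int.1.mul hiU_int.1) ?_
      refine Filter.Eventually.of_forall (fun ω => ?_)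
      by_cases h1 : ω ∈ Y1 ⁻¹' v <;>
        simp [hiUdef, Set.indicator_apply, h1, Real.norm_eq_abs, abs_nonneg]
    have h1 : ∫ ω in t ∩ Y1 ⁻¹' v, (iT ω - e' ω) ∂P
        = ∫ ω in t, ((iU * iT) ω - (e' * iU) ω) ∂P := by
      rw [← setIntegral_indicator hvmeas]
      refine setIntegral_congr_fun htmeas (fun ω _ => ?_)
      by_cases hω : ω ∈ Y1 ⁻¹' v <;>
        simp [hiUdef, Set.indicator_apply, hω, mul_comm]
    have c2 : P[iU * iT|MeasurableSpace.comap L inferInstance]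
        =ᵐ[P] fun ω => (P[iU|MeasurableSpace.comap L inferInstance]) ω * e' ω := by
      have hci := (condIndepFun_iff_condExp_inter_preimage_eq_mul hY1 hA).mp hexch
        v {true} hv (measurableSet_singleton true)
      calc P[iU * iT|MeasurableSpace.comap L inferInstance]
          = P⟦Y1 ⁻¹' v ∩ A ⁻¹' {true}|MeasurableSpace.comap L inferInstance⟧ := by rw [hprod]
        _ =ᵐ[P] fun ω => (P⟦Y1 ⁻¹' v|MeasurableSpace.comap L inferInstance⟧) ω
            * (P⟦A ⁻¹' {true}|MeasurableSpace.comap L inferInstance⟧) ω := hci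
        _ = fun ω => (P[iU|MeasurableSpace.comap L inferInstance]) ω * e' ω := rfl
    have c3 : P[e' * iU|MeasurableSpace.comap L inferInstance]
        =ᵐ[P] fun ω => (P[iU|MeasurableSpace.comap L inferInstance]) ω * e' ω := by
      refine (condExp_mul_of_stronglyMeasurable_left stronglyMeasurable_condExp hUe_int hiU_int).trans ?_
      filter_upwards with ω using mul_comm _ _
    have e1 : ∫ ω in t, (iU * iT) ω ∂P
        = ∫ ω in t, (P[iU|MeasurableSpace.comap L inferInstance]) ω * e' ω ∂P := by
      rw [← setIntegral_condExp hG hUT_int htG]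
      exact setIntegral_congr_ae (hG t htG) (c2.mono fun ω h _ => h)
    have e2 : ∫ ω in t, (e' * iU) ω ∂P
        = ∫ ω in t, (P[iU|MeasurableSpace.comap L inferInstance]) ω * e' ω ∂P := by
      rw [← setIntegral_condExp hG hUe_int htG]
      exact setIntegral_congr_ae (hG t htG) (c3.mono fun ω h _ => h)
    rw [h1, integral_sub hUT_int.integrableOn hUe_int.integrableOn, e1, e2, sub_self]
  · intro t htm h0
    have htmeas : MeasurableSet t := hm t htm
    have htot : ∫ ω, (iT ω - e' ω) ∂P = 0 := by
      rw [integral_sub hiT_int he'_int]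
      have hce : ∫ ω, e' ω ∂P = ∫ ω, iT ω ∂P := integral_condExp hG
      rw [hce, sub_self]
    have hadd := integral_add_compl htmeas hh_int
    rw [← hadd] at htot
    linarith
  · intro f hdisj hfm h0
    rw [integral_iUnion (fun i => hm _ (hfm i)) hdisj hh_int.integrableOn]
    simp [h0]

lemma ipw_pullout {Ω S : Type*} [mΩ : MeasurableSpace Ω] [StandardBorelSpace Ω] [Nonempty Ω]
    [MeasurableSpace S]
    (P : Measure Ω) [IsProbabilityMeasure P]
    {L : Ω → S} (hL : Measurable L)
    {Y1 : Ω → ℝ} (hY1 : Measurable Y1)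
    {A : Ω → Bool} (hA : Measurable A)
    (hexch : CondIndepFun (MeasurableSpace.comap L inferInstance) hL.comap_le Y1 A P)
    (F : Ω → ℝ)
    (hF : StronglyMeasurable[MeasurableSpace.comap L inferInstance
      ⊔ MeasurableSpace.comap Y1 inferInstance] F)
    (hFiT : Integrable (fun ω => F ω * (A ⁻¹' {true}).indicator (fun _ => (1:ℝ)) ω) P)
    (hFe : Integrable (fun ω => F ω *
      (P[(A ⁻¹' {true}).indicator (fun _ => (1:ℝ)) | MeasurableSpace.comap L inferInstance]) ω) P) :
    ∫ ω, F ω * (A ⁻¹' {true}).indicator (fun _ => (1:ℝ)) ω ∂P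
      = ∫ ω, F ω *
        (P[(A ⁻¹' {true}).indicator (fun _ => (1:ℝ)) | MeasurableSpace.comap L inferInstance]) ω
        ∂P := by
  have hTmeas : MeasurableSet (A ⁻¹' {true}) := hA (measurableSet_singleton true)
  set iT : Ω → ℝ := (A ⁻¹' {true}).indicator (fun _ => 1) with hiTdef
  set e' : Ω → ℝ := P[iT | MeasurableSpace.comap L inferInstance] with he'def
  have hm : MeasurableSpace.comap L inferInstance ⊔ MeasurableSpace.comap Y1 inferInstance ≤ mΩ :=
    sup_le hL.comap_le hY1.comap_le
  have hiT_int : Integrable iT P := (integrable_const (1:ℝ)).indicator hTmeas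
  have he'_int : Integrable e' P := integrable_condExp
  have hh_int : Integrable (fun ω => iT ω - e' ω) P := hiT_int.sub he'_int
  have hzero := ipw_zero P hL hY1 hA hexch
  have hcondm : P[(fun ω => iT ω - e' ω) | MeasurableSpace.comap L inferInstance
      ⊔ MeasurableSpace.comap Y1 inferInstance] =ᵐ[P] (fun _ => (0:ℝ)) := by
    refine ae_eq_of_forall_setIntegral_eq_of_sigmaFinite' hm
      (fun s _ _ => integrable_condExp.integrableOn)
      (fun s _ _ => (integrable_const (0:ℝ)).integrableOn)
      (fun s hs _ => ?_)
      (stronglyMeasurable_condExp.aestronglyMeasurable)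
      ((stronglyMeasurable_const).aestronglyMeasurable)
    rw [setIntegral_condExp hm hh_int hs, hzero s hs]
    simp
  have hFh_int : Integrable (fun ω => F ω * (iT ω - e' ω)) P := by
    refine (hFiT.sub hFe).congr (Filter.Eventually.of_forall (fun ω => ?_))
    show F ω * iT ω - F ω * e' ω = F ω * (iT ω - e' ω)
    ring
  have h0 : ∫ ω, F ω * (iT ω - e' ω) ∂P = 0 := by
    calc ∫ ω, F ω * (iT ω - e' ω) ∂P
        = ∫ ω, (P[(fun ω => F ω * (iT ω - e' ω)) | MeasurableSpace.comap L inferInstance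
            ⊔ MeasurableSpace.comap Y1 inferInstance]) ω ∂P := (integral_condExp hm).symm
      _ = ∫ ω, (F * P[(fun ω => iT ω - e' ω) | MeasurableSpace.comap L inferInstance
            ⊔ MeasurableSpace.comap Y1 inferInstance]) ω ∂P :=
          integral_congr_ae (condExp_mul_of_stronglyMeasurable_left hF hFh_int hh_int)
      _ = 0 := by
          rw [← integral_zero Ω ℝ (μ := P)]
          refine integral_congr_ae ?_
          filter_upwards [hcondm] with ω hω
          simp [Pi.mul_apply, hω]
  have hsub := integral_sub hFiT hFe
  have : ∫ ω, (F ω * iT ω - F ω * e' ω) ∂P = 0 := by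
    rw [← h0]; congr 1; funext ω; ring
  rw [this] at hsub
  linarith [hsub]
/-- Subgroup-specific inverse probability weighting identification: for a measurable
subgroup `w ⊆ S` with `P(L ∈ w) > 0`,
`E[Y¹ | L ∈ w] = E[1_{L∈w} · 1_{A=1} · Y / e] / E[1_{L∈w} · 1_{A=1} / e]`. -/
theorem subgroup_ipw_ratio_identification
    {Ω S : Type*} [MeasurableSpace Ω] [StandardBorelSpace Ω] [Nonempty Ω]
    [MeasurableSpace S] [StandardBorelSpace S]
    (P : Measure Ω) [IsProbabilityMeasure P]
    (L : Ω → S) (hL : Measurable L)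
    (A : Ω → Bool) (hA : Measurable A)
    (Y Y1 : Ω → ℝ) (hY : Measurable Y) (hY1 : Measurable Y1)
    (hYbdd : ∃ B : ℝ, ∀ᵐ ω ∂P, |Y ω| ≤ B)
    (hY1bdd : ∃ B : ℝ, ∀ᵐ ω ∂P, |Y1 ω| ≤ B)
    -- consistency: Y = Y¹ a.s. on {A = 1}
    (hcons : ∀ᵐ ω ∂P, A ω = true → Y ω = Y1 ω)
    -- exchangeability: Y¹ ⫫ A | σ(L)
    (hexch : CondIndepFun (MeasurableSpace.comap L inferInstance) hL.comap_le Y1 A P)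
    -- propensity score: e is a version of E[1_{A=1} | σ(L)]
    (e : Ω → ℝ)
    (he : e =ᵐ[P]
      P[(fun ω => if A ω then (1 : ℝ) else 0) | MeasurableSpace.comap L inferInstance])
    -- positivity
    (η : ℝ) (hη : 0 < η) (hpos : ∀ᵐ ω ∂P, η ≤ e ω)
    -- the subgroup
    (w : Set S) (hw : MeasurableSet w) (hwpos : 0 < P (L ⁻¹' w)) :
    ∫ ω, Y1 ω ∂(P[|L ⁻¹' w]) =
      (∫ ω, Set.indicator w (fun _ => (1 : ℝ)) (L ω) * (if A ω then (1 : ℝ) else 0) * Y ω / e ω ∂P) /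
      (∫ ω, Set.indicator w (fun _ => (1 : ℝ)) (L ω) * (if A ω then (1 : ℝ) else 0) / e ω ∂P) := by
  obtain ⟨B, hB0⟩ := hY1bdd
  have hB : ∀ᵐ ω ∂P, |Y1 ω| ≤ |B| := hB0.mono fun ω h => h.trans (le_abs_self B)
  clear hB0
  have hG : MeasurableSpace.comap L inferInstance ≤ ‹MeasurableSpace Ω› := hL.comap_le
  have hTmeas : MeasurableSet (A ⁻¹' {true}) := hA (measurableSet_singleton true)
  set iT : Ω → ℝ := (A ⁻¹' {true}).indicator (fun _ => 1) with hiTdef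
  set e' : Ω → ℝ := P[iT | MeasurableSpace.comap L inferInstance] with he'def
  have hiT_eq : (fun ω => if A ω then (1:ℝ) else 0) = iT := by
    funext ω
    by_cases h : A ω = true <;> simp [hiTdef, Set.indicator_apply, h]
  have hee' : e =ᵐ[P] e' := by rw [he'def, ← hiT_eq]; exact he
  have hiT_int : Integrable iT P := (integrable_const (1:ℝ)).indicator hTmeas
  have he'_int : Integrable e' P := integrable_condExp
  have he'_pos : ∀ᵐ ω ∂P, η ≤ e' ω := by
    filter_upwards [hpos, hee'] with ω h1 h2
    rw [← h2]; exact h1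
  have he'_le1 : ∀ᵐ ω ∂P, e' ω ≤ 1 := by
    have h1 : iT ≤ᵐ[P] (fun _ => (1:ℝ)) := Filter.Eventually.of_forall fun ω => by
      by_cases h : ω ∈ A ⁻¹' {true} <;> simp [hiTdef, Set.indicator_apply, h]
    have := condExp_mono (m := MeasurableSpace.comap L inferInstance)
      hiT_int (integrable_const (1:ℝ)) h1
    have hc := condExp_const hG (1:ℝ) (μ := P)
    filter_upwards [this] with ω h2
    rw [he'def]
    calc (P[iT | MeasurableSpace.comap L inferInstance]) ω
        ≤ (P[(fun _ => (1:ℝ)) | MeasurableSpace.comap L inferInstance]) ω := h2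
      _ = 1 := by rw [hc]
  -- subgroup indicator
  have hWG : MeasurableSet[MeasurableSpace.comap L inferInstance] (L ⁻¹' w) := ⟨w, hw, rfl⟩
  have hWmeas : MeasurableSet (L ⁻¹' w) := hG _ hWG
  set iW : Ω → ℝ := (L ⁻¹' w).indicator (fun _ => 1) with hiWdef
  have hiW_eq : ∀ ω, Set.indicator w (fun _ => (1:ℝ)) (L ω) = iW ω := fun ω => by
    by_cases h : L ω ∈ w <;> simp [hiWdef, Set.indicator_apply, h, Set.mem_preimage]
  have hiW_le1 : ∀ ω, |iW ω| ≤ 1 := fun ω => by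
    by_cases h : ω ∈ L ⁻¹' w <;> simp [hiWdef, Set.indicator_apply, h]
  have hiT_le1 : ∀ ω, |iT ω| ≤ 1 := fun ω => by
    by_cases h : ω ∈ A ⁻¹' {true} <;> simp [hiTdef, Set.indicator_apply, h]
  have hY1m : @Measurable Ω ℝ (MeasurableSpace.comap Y1 inferInstance) _ Y1 :=
    fun s hs => ⟨s, hs, rfl⟩
  set g : Ω → ℝ := fun ω => iW ω * (e' ω)⁻¹ with hgdef
  have hg_sm : StronglyMeasurable[MeasurableSpace.comap L inferInstance] g := by
    refine Measurable.stronglyMeasurable ?_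
    exact (measurable_const.indicator hWG).mul stronglyMeasurable_condExp.measurable.inv
  have hg_bd : ∀ᵐ ω ∂P, |g ω| ≤ η⁻¹ := by
    filter_upwards [he'_pos] with ω h1
    have h2 : 0 < e' ω := lt_of_lt_of_le hη h1
    rw [hgdef, abs_mul, abs_inv, abs_of_pos h2]
    calc |iW ω| * (e' ω)⁻¹ ≤ 1 * η⁻¹ := by
          refine mul_le_mul (hiW_le1 ω) ?_ (by positivity) zero_le_one
          exact inv_anti₀ hη h1
      _ = η⁻¹ := one_mul _
  have hg_asm : AEStronglyMeasurable g P := (hg_sm.mono hG).aestronglyMeasurable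
  have hgY1_asm : AEStronglyMeasurable (fun ω => g ω * Y1 ω) P :=
    hg_asm.mul hY1.aestronglyMeasurable
  -- integrability of the four products fed to ipw_pullout
  have hint1 : Integrable (fun ω => (g ω * Y1 ω) * iT ω) P := by
    refine ipw_aux_bdd_integrable (C := η⁻¹ * |B| * 1)
      (hgY1_asm.mul hiT_int.1) ?_
    filter_upwards [hg_bd, hB] with ω h1 h2
    rw [abs_mul, abs_mul]
    refine mul_le_mul (mul_le_mul h1 h2 (abs_nonneg _) (by positivity)) (hiT_le1 ω)
      (abs_nonneg _) (by positivity)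
  have hint2 : Integrable (fun ω => (g ω * Y1 ω) * e' ω) P := by
    refine ipw_aux_bdd_integrable (C := η⁻¹ * |B| * 1)
      (hgY1_asm.mul he'_int.1) ?_
    filter_upwards [hg_bd, hB, he'_pos, he'_le1] with ω h1 h2 h3 h4
    rw [abs_mul, abs_mul]
    refine mul_le_mul (mul_le_mul h1 h2 (abs_nonneg _) (by positivity)) ?_
      (abs_nonneg _) (by positivity)
    rw [abs_of_pos (lt_of_lt_of_le hη h3)]; exact h4
  have hint3 : Integrable (fun ω => g ω * iT ω) P := by
    refine ipw_aux_bdd_integrable (C := η⁻¹ * 1) (hg_asm.mul hiT_int.1) ?_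
    filter_upwards [hg_bd] with ω h1
    rw [abs_mul]
    exact mul_le_mul h1 (hiT_le1 ω) (abs_nonneg _) (by positivity)
  have hint4 : Integrable (fun ω => g ω * e' ω) P := by
    refine ipw_aux_bdd_integrable (C := η⁻¹ * 1) (hg_asm.mul he'_int.1) ?_
    filter_upwards [hg_bd, he'_pos, he'_le1] with ω h1 h3 h4
    rw [abs_mul]
    refine mul_le_mul h1 ?_ (abs_nonneg _) (by positivity)
    rw [abs_of_pos (lt_of_lt_of_le hη h3)]; exact h4
  -- numerator
  have hnum : ∫ ω, Set.indicator w (fun _ => (1:ℝ)) (L ω) * (if A ω then (1:ℝ) else 0) * Y ω / e ω ∂P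
      = ∫ ω, iW ω * Y1 ω ∂P := by
    have s1 : (fun ω => Set.indicator w (fun _ => (1:ℝ)) (L ω) * (if A ω then (1:ℝ) else 0) * Y ω / e ω)
        =ᵐ[P] fun ω => (g ω * Y1 ω) * iT ω := by
      filter_upwards [hcons, hee', he'_pos] with ω h1 h2 h3
      rw [hiW_eq ω, h2]
      by_cases h : A ω = true
      · have hY' : Y ω = Y1 ω := h1 h
        have hiTω : iT ω = 1 := by simp [hiTdef, Set.indicator_apply, h]
        rw [hY', if_pos h, hiTω, hgdef]
        field_simp
      · have hiTω : iT ω = 0 := by simp [hiTdef, Set.indicator_apply, h]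
        rw [if_neg h, hiTω]
        simp
    have s2 : (fun ω => (g ω * Y1 ω) * e' ω) =ᵐ[P] fun ω => iW ω * Y1 ω := by
      filter_upwards [he'_pos] with ω h1
      have hne : e' ω ≠ 0 := ne_of_gt (lt_of_lt_of_le hη h1)
      rw [hgdef]
      field_simp
    calc ∫ ω, Set.indicator w (fun _ => (1:ℝ)) (L ω) * (if A ω then (1:ℝ) else 0) * Y ω / e ω ∂P
        = ∫ ω, (g ω * Y1 ω) * iT ω ∂P := integral_congr_ae s1
      _ = ∫ ω, (g ω * Y1 ω) * e' ω ∂P := by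
          refine ipw_pullout P hL hY1 hA hexch (fun ω => g ω * Y1 ω) ?_ hint1 hint2
          exact (hg_sm.mono le_sup_left).mul
            ((Measurable.stronglyMeasurable hY1m).mono le_sup_right)
      _ = ∫ ω, iW ω * Y1 ω ∂P := integral_congr_ae s2
  -- denominator
  have hden : ∫ ω, Set.indicator w (fun _ => (1:ℝ)) (L ω) * (if A ω then (1:ℝ) else 0) / e ω ∂P
      = (P (L ⁻¹' w)).toReal := by
    have s1 : (fun ω => Set.indicator w (fun _ => (1:ℝ)) (L ω) * (if A ω then (1:ℝ) else 0) / e ω)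
        =ᵐ[P] fun ω => g ω * iT ω := by
      filter_upwards [hee'] with ω h2
      rw [hiW_eq ω, h2, ← hiT_eq, hgdef]
      show iW ω * (if A ω then (1:ℝ) else 0) / e' ω = iW ω * (e' ω)⁻¹ * (if A ω then (1:ℝ) else 0)
      ring
    have s2 : (fun ω => g ω * e' ω) =ᵐ[P] iW := by
      filter_upwards [he'_pos] with ω h1
      have hne : e' ω ≠ 0 := ne_of_gt (lt_of_lt_of_le hη h1)
      rw [hgdef]
      field_simp
    calc ∫ ω, Set.indicator w (fun _ => (1:ℝ)) (L ω) * (if A ω then (1:ℝ) else 0) / e ω ∂P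
        = ∫ ω, g ω * iT ω ∂P := integral_congr_ae s1
      _ = ∫ ω, g ω * e' ω ∂P :=
          ipw_pullout P hL hY1 hA hexch g (hg_sm.mono le_sup_left) hint3 hint4
      _ = ∫ ω, iW ω ∂P := integral_congr_ae s2
      _ = (P (L ⁻¹' w)).toReal := integral_indicator_one hWmeas
  -- left-hand side
  have hlhs : ∫ ω, Y1 ω ∂(P[|L ⁻¹' w]) = (P (L ⁻¹' w)).toReal⁻¹ * ∫ ω, iW ω * Y1 ω ∂P := by
    rw [ProbabilityTheory.cond, integral_smul_measure, ENNReal.toReal_inv]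
    congr 1
    rw [← integral_indicator hWmeas]
    refine integral_congr_ae (Filter.Eventually.of_forall fun ω => ?_)
    by_cases h : ω ∈ L ⁻¹' w <;> simp [hiWdef, Set.indicator_apply, h]
  rw [hnum, hden, hlhs, inv_mul_eq_div]
end

section
/- In the point-treatment causal setup, the g-computation (outcome regression) identification holds: if m : Ω → ℝ is σ(L)-measurable, P-almost surely bounded, and satisfies m · e = E[1_{A=1} · Y | σ(L)] P-almost surely, then E[m] = E[Y¹]. -/
open MeasureTheory ProbabilityTheory
open scoped NNReal ENNReal

private lemma integrable_of_ae_bdd {Ω : Type*} {mΩ : MeasurableSpace Ω} {P : Measure Ω}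
    [IsFiniteMeasure P] {f : Ω → ℝ} (hf : AEStronglyMeasurable f P)
    (h : ∃ B : ℝ, ∀ᵐ ω ∂P, |f ω| ≤ B) : Integrable f P := by
  obtain ⟨B, hB⟩ := h
  exact ⟨hf, HasFiniteIntegral.of_bounded (hB.mono fun ω h => by simpa using h)⟩

private lemma integrable_indicator_one' {Ω : Type*} {mΩ : MeasurableSpace Ω} {P : Measure Ω}
    [IsFiniteMeasure P] {s : Set Ω} (hs : MeasurableSet s) :
    Integrable (s.indicator fun _ => (1 : ℝ)) P :=
  integrable_of_ae_bdd (stronglyMeasurable_const.indicator hs).aestronglyMeasurable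
    ⟨1, .of_forall fun ω => by by_cases h : ω ∈ s <;> simp [Set.indicator, h]⟩

private theorem gcomp_aux {Ω : Type*} [mΩ : MeasurableSpace Ω] [StandardBorelSpace Ω]
    (P : Measure Ω) [IsProbabilityMeasure P]
    (mL : MeasurableSpace Ω) (hle : mL ≤ mΩ)
    (A : Ω → Bool) (hA : Measurable[mΩ] A)
    (Y Y1 : Ω → ℝ) (hY1 : Measurable[mΩ] Y1)
    (hY1bdd : ∃ B : ℝ, ∀ᵐ ω ∂P, |Y1 ω| ≤ B)
    (hcons : ∀ᵐ ω ∂P, A ω = true → Y ω = Y1 ω)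
    (hexch : CondIndepFun (mΩ := mΩ) mL hle Y1 A P)
    (e : Ω → ℝ)
    (he : e =ᵐ[P] P[(fun ω => if A ω then (1 : ℝ) else 0) | mL])
    (η : ℝ) (hη : 0 < η) (hpos : ∀ᵐ ω ∂P, η ≤ e ω)
    (m : Ω → ℝ)
    (hm : (fun ω => m ω * e ω) =ᵐ[P]
      P[(fun ω => (if A ω then (1 : ℝ) else 0) * Y ω) | mL]) :
    ∫ ω, m ω ∂P = ∫ ω, Y1 ω ∂P := by
  classical
  obtain ⟨B1, hB1⟩ := hY1bdd
  set I : Ω → ℝ := fun ω => if A ω then (1 : ℝ) else 0 with hIdef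
  have hAset : MeasurableSet[mΩ] (A ⁻¹' {true}) := hA (measurableSet_singleton true)
  have hImeas : Measurable[mΩ] I := Measurable.ite hAset measurable_const measurable_const
  have hInonneg : ∀ ω, 0 ≤ I ω := fun ω => by by_cases h : A ω <;> simp [hIdef, h]
  have hIbdd : ∀ ω, |I ω| ≤ 1 := fun ω => by by_cases h : A ω <;> simp [hIdef, h]
  have hIint : Integrable I P :=
    integrable_of_ae_bdd hImeas.aestronglyMeasurable ⟨1, .of_forall hIbdd⟩
  have hY1int : Integrable Y1 P := integrable_of_ae_bdd hY1.aestronglyMeasurable ⟨B1, hB1⟩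
  set g := P[I | mL] with hgdef
  have hg_sm : StronglyMeasurable[mL] g := stronglyMeasurable_condExp
  have hg_meas : Measurable[mΩ] g := (hg_sm.mono hle).measurable
  have hg_int : Integrable g P := integrable_condExp
  have hg_nonneg : 0 ≤ᵐ[P] g := condExp_nonneg (.of_forall hInonneg)
  have hg_le_one : g ≤ᵐ[P] fun _ => (1 : ℝ) := by
    have h1 : I ≤ᵐ[P] fun _ => (1 : ℝ) := .of_forall fun ω => by
      by_cases h : A ω <;> simp [hIdef, h]
    have h2 := condExp_mono (m := mL) hIint (integrable_const (1 : ℝ)) h1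
    rwa [condExp_const hle] at h2
  have hg_bdd1 : ∀ᵐ ω ∂P, |g ω| ≤ 1 := by
    filter_upwards [hg_nonneg, hg_le_one] with ω h0 h1
    rw [abs_of_nonneg h0]; exact h1
  -- the sub-σ-algebra generated by L and Y1
  set m2 := mL ⊔ MeasurableSpace.comap Y1 inferInstance with hm2def
  have hle2 : m2 ≤ mΩ := sup_le hle hY1.comap_le
  have hY1m2 : Measurable[m2] Y1 := measurable_iff_comap_le.mpr le_sup_right
  letI mΩ' : MeasurableSpace Ω := mΩ
  -- densities
  set ρI : Ω → ℝ≥0 := fun ω => Real.toNNReal (I ω) with hρIdef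
  set ρg : Ω → ℝ≥0 := fun ω => Real.toNNReal (g ω) with hρgdef
  have hρImeas : Measurable[mΩ] ρI := hImeas.real_toNNReal
  have hρgmeas : Measurable[mΩ] ρg := hg_meas.real_toNNReal
  set μI := P.withDensity (fun ω => (ρI ω : ℝ≥0∞)) with hμIdef
  set μg := P.withDensity (fun ω => (ρg ω : ℝ≥0∞)) with hμgdef
  haveI : IsFiniteMeasure μI := by
    refine isFiniteMeasure_withDensity ?_
    refine ne_top_of_le_ne_top (by simp : ∫⁻ _, (1 : ℝ≥0∞) ∂P ≠ ⊤)
      (lintegral_mono fun ω => ?_)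
    by_cases h : A ω <;> simp [hρIdef, hIdef, h]
  haveI : IsFiniteMeasure μg := by
    refine isFiniteMeasure_withDensity ?_
    refine ne_top_of_le_ne_top (by simp : ∫⁻ _, (1 : ℝ≥0∞) ∂P ≠ ⊤)
      (lintegral_mono_ae ?_)
    filter_upwards [hg_le_one] with ω h1
    simpa [hρgdef] using ENNReal.coe_le_one_iff.mpr (Real.toNNReal_le_one.mpr h1)
  -- key generator equality coming from conditional independence
  have hgen : ∀ s : Set Ω, MeasurableSet[mL] s → ∀ t : Set ℝ, MeasurableSet t →
      ∫ ω in s ∩ Y1 ⁻¹' t, I ω ∂P = ∫ ω in s ∩ Y1 ⁻¹' t, g ω ∂P := by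
    intro s hs t ht
    have hts : MeasurableSet[mΩ] (Y1 ⁻¹' t) := hY1 ht
    have hindA : (A ⁻¹' {true}).indicator (fun _ => (1 : ℝ)) = I := by
      funext ω; by_cases h : A ω <;> simp [hIdef, Set.indicator, h]
    have h1 : (P⟦Y1 ⁻¹' t ∩ A ⁻¹' {true}|mL⟧) =ᵐ[P]
        fun ω => (P⟦Y1 ⁻¹' t|mL⟧) ω * g ω := by
      have := (condIndepFun_iff_condExp_inter_preimage_eq_mul (μ := P) hY1 hA).mp hexch
        t {true} ht (measurableSet_singleton true)
      rwa [hindA, ← hgdef] at this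
    have hint_tA : Integrable ((Y1 ⁻¹' t ∩ A ⁻¹' {true}).indicator fun _ => (1 : ℝ)) P :=
      integrable_indicator_one' (hts.inter hAset)
    have hint_t : Integrable ((Y1 ⁻¹' t).indicator fun _ => (1 : ℝ)) P :=
      integrable_indicator_one' hts
    have hint_gt : Integrable (fun ω => g ω * (Y1 ⁻¹' t).indicator (fun _ => (1 : ℝ)) ω) P :=
      hint_t.bdd_mul hg_meas.aestronglyMeasurable (hg_bdd1.mono fun ω h => by simpa using h)
    have hpull : P[fun ω => g ω * (Y1 ⁻¹' t).indicator (fun _ => (1 : ℝ)) ω|mL]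
        =ᵐ[P] fun ω => g ω * (P⟦Y1 ⁻¹' t|mL⟧) ω := by
      have := condExp_mul_of_stronglyMeasurable_left (μ := P) hg_sm hint_gt hint_t
      exact this
    calc ∫ ω in s ∩ Y1 ⁻¹' t, I ω ∂P
        = ∫ ω in s, (Y1 ⁻¹' t).indicator I ω ∂P := (setIntegral_indicator (μ := P) hts).symm
      _ = ∫ ω in s, ((Y1 ⁻¹' t ∩ A ⁻¹' {true}).indicator fun _ => (1 : ℝ)) ω ∂P := by
          refine integral_congr_ae (.of_forall fun ω => ?_)
          by_cases h1 : ω ∈ Y1 ⁻¹' t <;> by_cases h2 : A ω <;>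
            simp [Set.indicator, h1, h2, hIdef]
      _ = ∫ ω in s, (P⟦Y1 ⁻¹' t ∩ A ⁻¹' {true}|mL⟧) ω ∂P :=
          (setIntegral_condExp hle hint_tA hs).symm
      _ = ∫ ω in s, (P⟦Y1 ⁻¹' t|mL⟧) ω * g ω ∂P :=
          integral_congr_ae (ae_restrict_of_ae h1)
      _ = ∫ ω in s, (P[fun ω => g ω * (Y1 ⁻¹' t).indicator (fun _ => (1 : ℝ)) ω|mL]) ω ∂P := by
          refine integral_congr_ae (ae_restrict_of_ae ?_)
          filter_upwards [hpull] with ω hω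
          rw [hω, mul_comm]
      _ = ∫ ω in s, g ω * (Y1 ⁻¹' t).indicator (fun _ => (1 : ℝ)) ω ∂P :=
          setIntegral_condExp hle hint_gt hs
      _ = ∫ ω in s, (Y1 ⁻¹' t).indicator g ω ∂P := by
          refine integral_congr_ae (.of_forall fun ω => ?_)
          by_cases h1 : ω ∈ Y1 ⁻¹' t <;> simp [Set.indicator, h1]
      _ = ∫ ω in s ∩ Y1 ⁻¹' t, g ω ∂P := setIntegral_indicator (μ := P) hts
  -- π-system generating m2
  set C : Set (Set Ω) :=
    {u | ∃ s, MeasurableSet[mL] s ∧ ∃ t : Set ℝ, MeasurableSet t ∧ u = s ∩ Y1 ⁻¹' t} with hCdef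
  have hCgen : m2 = MeasurableSpace.generateFrom C := by
    refine le_antisymm (sup_le ?_ ?_) (MeasurableSpace.generateFrom_le ?_)
    · intro s hs
      exact MeasurableSpace.measurableSet_generateFrom
        ⟨s, hs, Set.univ, MeasurableSet.univ, by simp⟩
    · intro u hu
      obtain ⟨t, ht, rfl⟩ := hu
      exact MeasurableSpace.measurableSet_generateFrom
        ⟨Set.univ, MeasurableSet.univ, t, ht, by simp⟩
    · rintro u ⟨s, hs, t, ht, rfl⟩
      exact ((le_sup_left : mL ≤ m2) s hs).inter (hY1m2 ht)
  have hCpi : IsPiSystem C := by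
    rintro u ⟨s1, hs1, t1, ht1, rfl⟩ v ⟨s2, hs2, t2, ht2, rfl⟩ -
    refine ⟨s1 ∩ s2, hs1.inter hs2, t1 ∩ t2, ht1.inter ht2, ?_⟩
    rw [Set.preimage_inter]
    ext ω; simp only [Set.mem_inter_iff]; tauto
  -- the two weighted measures agree on C
  have hμIμg : ∀ u ∈ C, μI u = μg u := by
    rintro u ⟨s, hs, t, ht, rfl⟩
    have hu : MeasurableSet[mΩ] (s ∩ Y1 ⁻¹' t) := (hle s hs).inter (hY1 ht)
    rw [hμIdef, hμgdef, withDensity_apply _ hu, withDensity_apply _ hu]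
    have l1 : ∫⁻ ω in s ∩ Y1 ⁻¹' t, (ρI ω : ℝ≥0∞) ∂P
        = ENNReal.ofReal (∫ ω in s ∩ Y1 ⁻¹' t, I ω ∂P) :=
      (ofReal_integral_eq_lintegral_ofReal (μ := P.restrict (s ∩ Y1 ⁻¹' t)) hIint.integrableOn
        (ae_restrict_of_ae (.of_forall hInonneg))).symm
    have l2 : ∫⁻ ω in s ∩ Y1 ⁻¹' t, (ρg ω : ℝ≥0∞) ∂P
        = ENNReal.ofReal (∫ ω in s ∩ Y1 ⁻¹' t, g ω ∂P) :=
      (ofReal_integral_eq_lintegral_ofReal (μ := P.restrict (s ∩ Y1 ⁻¹' t)) hg_int.integrableOn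
        (ae_restrict_of_ae hg_nonneg)).symm
    rw [l1, l2, hgen s hs t ht]
  have huniv : μI Set.univ = μg Set.univ := by
    refine hμIμg _ ⟨Set.univ, MeasurableSet.univ, Set.univ, MeasurableSet.univ, by simp⟩
  -- hence their trims to m2 agree
  have htrim : μI.trim hle2 = μg.trim hle2 := by
    refine @ext_of_generate_finite Ω m2 (μI.trim hle2) (μg.trim hle2) C hCgen hCpi
      (isFiniteMeasure_trim hle2) ?_ ?_
    · intro u hu
      have hu2 : MeasurableSet[m2] u := by
        rw [hCgen]; exact MeasurableSpace.measurableSet_generateFrom hu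
      rw [trim_measurableSet_eq hle2 hu2, trim_measurableSet_eq hle2 hu2]
      exact hμIμg u hu
    · rw [trim_measurableSet_eq hle2 MeasurableSet.univ,
        trim_measurableSet_eq hle2 MeasurableSet.univ]
      exact huniv
  -- key claim: ∫_s I·Y1 = ∫_s g·Y1 for all s ∈ mL
  have claimC : ∀ s : Set Ω, MeasurableSet[mL] s →
      ∫ ω in s, I ω * Y1 ω ∂P = ∫ ω in s, g ω * Y1 ω ∂P := by
    intro s hs
    have hsm : MeasurableSet[mΩ] s := hle s hs
    have hsm2 : MeasurableSet[m2] s := (le_sup_left : mL ≤ m2) s hs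
    have hf2 : StronglyMeasurable[m2] (s.indicator Y1) := hY1m2.stronglyMeasurable.indicator hsm2
    have e1 : ∫ ω in s, I ω * Y1 ω ∂P = ∫ ω, I ω * s.indicator Y1 ω ∂P := by
      rw [← integral_indicator (μ := P) hsm]
      refine integral_congr_ae (.of_forall fun ω => ?_)
      by_cases h : ω ∈ s <;> simp [Set.indicator, h]
    have e2 : ∫ ω, I ω * s.indicator Y1 ω ∂P = ∫ ω, s.indicator Y1 ω ∂μI := by
      rw [hμIdef, integral_withDensity_eq_integral_smul (μ := P) hρImeas]
      refine integral_congr_ae (.of_forall fun ω => ?_)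
      simp [hρIdef, NNReal.smul_def, Real.coe_toNNReal _ (hInonneg ω)]
    have e3 : ∫ ω, s.indicator Y1 ω ∂μI = ∫ ω, s.indicator Y1 ω ∂μg := by
      rw [integral_trim hle2 hf2, integral_trim hle2 hf2, htrim]
    have e4 : ∫ ω, s.indicator Y1 ω ∂μg = ∫ ω, g ω * s.indicator Y1 ω ∂P := by
      rw [hμgdef, integral_withDensity_eq_integral_smul (μ := P) hρgmeas]
      refine integral_congr_ae ?_
      filter_upwards [hg_nonneg] with ω h0
      simp [hρgdef, NNReal.smul_def, Real.coe_toNNReal _ h0]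
    have e5 : ∫ ω, g ω * s.indicator Y1 ω ∂P = ∫ ω in s, g ω * Y1 ω ∂P := by
      rw [← integral_indicator (μ := P) hsm]
      refine integral_congr_ae (.of_forall fun ω => ?_)
      by_cases h : ω ∈ s <;> simp [Set.indicator, h]
    rw [e1, e2, e3, e4, e5]
  -- key conditional expectation identity
  have hmulint : Integrable (fun ω => I ω * Y1 ω) P :=
    hY1int.bdd_mul hImeas.aestronglyMeasurable
      (.of_forall fun ω => by simpa using hIbdd ω)
  have hgY1int : Integrable (fun ω => g ω * Y1 ω) P :=
    hY1int.bdd_mul hg_meas.aestronglyMeasurable (hg_bdd1.mono fun ω h => by simpa using h)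
  have hgEint : Integrable (fun ω => g ω * (P[Y1|mL]) ω) P :=
    integrable_condExp.bdd_mul hg_meas.aestronglyMeasurable
      (hg_bdd1.mono fun ω h => by simpa using h)
  have hpull2 : P[fun ω => g ω * Y1 ω|mL] =ᵐ[P] fun ω => g ω * (P[Y1|mL]) ω := by
    have := condExp_mul_of_stronglyMeasurable_left (μ := P) hg_sm hgY1int hY1int
    exact this
  have key : (fun ω => g ω * (P[Y1|mL]) ω) =ᵐ[P] P[fun ω => I ω * Y1 ω|mL] := by
    refine ae_eq_condExp_of_forall_setIntegral_eq hle hmulint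
      (fun s _ _ => hgEint.integrableOn) (fun s hs _ => ?_) ?_
    · calc ∫ ω in s, g ω * (P[Y1|mL]) ω ∂P
          = ∫ ω in s, (P[fun ω => g ω * Y1 ω|mL]) ω ∂P :=
            integral_congr_ae (ae_restrict_of_ae hpull2.symm)
        _ = ∫ ω in s, g ω * Y1 ω ∂P := setIntegral_condExp hle hgY1int hs
        _ = ∫ ω in s, I ω * Y1 ω ∂P := (claimC s hs).symm
    · exact StronglyMeasurable.aestronglyMeasurable (hg_sm.mul stronglyMeasurable_condExp)
  -- consistency
  have hIY : (fun ω => I ω * Y ω) =ᵐ[P] fun ω => I ω * Y1 ω := by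
    filter_upwards [hcons] with ω h
    by_cases hAω : A ω
    · simp [hIdef, hAω, h hAω]
    · simp [hIdef, hAω]
  have hm' : (fun ω => m ω * e ω) =ᵐ[P] P[fun ω => I ω * Y ω|mL] := hm
  have h2 : (fun ω => m ω * e ω) =ᵐ[P] fun ω => g ω * (P[Y1|mL]) ω :=
    hm'.trans ((condExp_congr_ae hIY).trans key.symm)
  have hfinal : m =ᵐ[P] P[Y1|mL] := by
    filter_upwards [h2, he, hpos] with ω hmul hee hpo
    have heη : e ω ≠ 0 := ne_of_gt (lt_of_lt_of_le hη hpo)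
    have : m ω * e ω = (P[Y1|mL]) ω * e ω := by
      rw [hmul, hee]; ring
    exact mul_right_cancel₀ heη this
  calc ∫ ω, m ω ∂P = ∫ ω, (P[Y1|mL]) ω ∂P := integral_congr_ae hfinal
    _ = ∫ ω, Y1 ω ∂P := integral_condExp hle

/-- Single-time-period g-computation (outcome regression) identification: if `m` is
`σ(L)`-measurable, a.s. bounded, and satisfies `m · e = E[1_{A=1} · Y | σ(L)]` a.s.,
then `E[m] = E[Y¹]`. -/
theorem gcomp_identification
    {Ω S : Type*} [MeasurableSpace Ω] [StandardBorelSpace Ω] [Nonempty Ω]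
    [MeasurableSpace S] [StandardBorelSpace S]
    (P : Measure Ω) [IsProbabilityMeasure P]
    (L : Ω → S) (hL : Measurable L)
    (A : Ω → Bool) (hA : Measurable A)
    (Y Y1 : Ω → ℝ) (hY : Measurable Y) (hY1 : Measurable Y1)
    (hYbdd : ∃ B : ℝ, ∀ᵐ ω ∂P, |Y ω| ≤ B)
    (hY1bdd : ∃ B : ℝ, ∀ᵐ ω ∂P, |Y1 ω| ≤ B)
    -- consistency: Y = Y¹ a.s. on {A = 1}
    (hcons : ∀ᵐ ω ∂P, A ω = true → Y ω = Y1 ω)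
    -- exchangeability: Y¹ ⫫ A | σ(L)
    (hexch : CondIndepFun (MeasurableSpace.comap L inferInstance) hL.comap_le Y1 A P)
    -- propensity score: e is a version of E[1_{A=1} | σ(L)]
    (e : Ω → ℝ)
    (he : e =ᵐ[P]
      P[(fun ω => if A ω then (1 : ℝ) else 0) | MeasurableSpace.comap L inferInstance])
    -- positivity
    (η : ℝ) (hη : 0 < η) (hpos : ∀ᵐ ω ∂P, η ≤ e ω)
    -- m is (a version of) the conditional mean outcome among the treated given L
    (m : Ω → ℝ)
    (hm_meas : Measurable[MeasurableSpace.comap L inferInstance] m)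
    (hm_bdd : ∃ B : ℝ, ∀ᵐ ω ∂P, |m ω| ≤ B)
    (hm : (fun ω => m ω * e ω) =ᵐ[P]
      P[(fun ω => (if A ω then (1 : ℝ) else 0) * Y ω) |
        MeasurableSpace.comap L inferInstance]) :
    ∫ ω, m ω ∂P = ∫ ω, Y1 ω ∂P :=
  gcomp_aux P (MeasurableSpace.comap L inferInstance) hL.comap_le A hA Y Y1 hY1 hY1bdd
    hcons hexch e he η hη hpos m hm
end

section
/- In the two-period longitudinal causal setup, the longitudinal inverse probability weighting identification holds: E[1_{A₀=1} · 1_{A₁=1} · Y / (g₀ · g₁)] = E[Y¹¹]. -/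
open MeasureTheory ProbabilityTheory Set

lemma aux_integrable_of_bdd {Ω : Type*} [MeasurableSpace Ω] {P : Measure Ω}
    [IsProbabilityMeasure P] {f : Ω → ℝ} {C : ℝ}
    (hf : AEStronglyMeasurable f P) (h : ∀ᵐ ω ∂P, |f ω| ≤ C) : Integrable f P :=
  Integrable.mono' (integrable_const C) hf (by filter_upwards [h] with ω hω; simpa using hω)

lemma aux_integral_mul_condexp {Ω : Type*} {m mΩ : MeasurableSpace Ω}
    (hm : m ≤ mΩ) (P : Measure Ω) [IsProbabilityMeasure P]
    {W X : Ω → ℝ} (hW : StronglyMeasurable[m] W)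
    (hWX : Integrable (fun ω => W ω * X ω) P) (hX : Integrable X P) :
    ∫ ω, W ω * X ω ∂P = ∫ ω, W ω * (P[X|m]) ω ∂P := by
  haveI : SigmaFinite (P.trim hm) := (isFiniteMeasure_trim hm).toSigmaFinite
  rw [← integral_condExp hm (f := fun ω => W ω * X ω)]
  refine integral_congr_ae ?_
  exact condExp_mul_of_stronglyMeasurable_left hW hWX hX

lemma aux_key_mul_condexp {Ω : Type*} {m mΩ : MeasurableSpace Ω} [StandardBorelSpace Ω]
    (hm : m ≤ mΩ)
    (P : Measure Ω) [IsProbabilityMeasure P]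
    {f : Ω → ℝ} (hf : Measurable f) (hfi : Integrable f P)
    {b : Ω → Bool} (hb : Measurable b)
    (h : CondIndepFun m hm f b P) :
    P[fun ω => f ω * (if b ω then (1:ℝ) else 0) | m]
      =ᵐ[P] fun ω => (P[f|m]) ω * (P[fun ω' => if b ω' then (1:ℝ) else 0|m]) ω := by
  set B : Set Ω := b ⁻¹' {true} with hBdef
  have hBmeas : MeasurableSet B := hb (measurableSet_singleton true)
  have hIeq : (fun ω' => if b ω' then (1:ℝ) else 0) = B.indicator fun _ => (1:ℝ) := by
    funext ω; by_cases hω : b ω <;> simp [hBdef, hω]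
  have hfIeq : (fun ω => f ω * (if b ω then (1:ℝ) else 0)) = B.indicator f := by
    funext ω; by_cases hω : b ω <;> simp [hBdef, hω]
  rw [hIeq, hfIeq]
  rw [condIndepFun_iff_condExp_inter_preimage_eq_mul hf hb] at h
  -- kernel version of conditional independence for rational Iic sets
  have hq : ∀ᵐ ω ∂P, ∀ q : ℚ,
      condExpKernel P m ω (f ⁻¹' Iic (q:ℝ) ∩ B)
        = condExpKernel P m ω (f ⁻¹' Iic (q:ℝ)) * condExpKernel P m ω B := by
    rw [ae_all_iff]
    intro q
    have hS : MeasurableSet (f ⁻¹' Iic (q:ℝ)) := hf measurableSet_Iic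
    filter_upwards [condExpKernel_ae_eq_condExp hm (hS.inter hBmeas),
      condExpKernel_ae_eq_condExp hm hS,
      condExpKernel_ae_eq_condExp hm hBmeas,
      h (Iic (q:ℝ)) {true} measurableSet_Iic (measurableSet_singleton true)]
      with ω h1 h2 h3 h4
    have htr : (condExpKernel P m ω (f ⁻¹' Iic (q:ℝ) ∩ B)).toReal
        = (condExpKernel P m ω (f ⁻¹' Iic (q:ℝ))).toReal * (condExpKernel P m ω B).toReal := by
      simp only [← measureReal_def]; rw [h1, h2, h3]; exact h4
    rw [← ENNReal.toReal_mul] at htr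
    exact (ENNReal.toReal_eq_toReal_iff' (measure_ne_top _ _)
      (ENNReal.mul_ne_top (measure_ne_top _ _) (measure_ne_top _ _))).mp htr
  -- upgrade to all real Iic sets
  have hx : ∀ᵐ ω ∂P, ∀ x : ℝ,
      condExpKernel P m ω (f ⁻¹' Iic x ∩ B)
        = condExpKernel P m ω (f ⁻¹' Iic x) * condExpKernel P m ω B := by
    filter_upwards [hq] with ω hω
    intro x
    haveI : Nonempty {q : ℚ // x < (q:ℝ)} := by
      obtain ⟨q, hq'⟩ := exists_rat_gt x
      exact ⟨⟨q, hq'⟩⟩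
    have hinter1 : f ⁻¹' Iic x = ⋂ q : {q : ℚ // x < (q:ℝ)}, f ⁻¹' Iic ((q:ℚ):ℝ) := by
      ext y
      simp only [mem_preimage, mem_Iic, mem_iInter]
      constructor
      · intro hy q; exact hy.trans (le_of_lt q.2)
      · intro hy
        by_contra hlt
        push_neg at hlt
        obtain ⟨q, hq1, hq2⟩ := exists_rat_btwn hlt
        exact absurd (hy ⟨q, hq1⟩) (not_le.mpr hq2)
    have hdir : Directed (· ⊇ ·)
        (fun q : {q : ℚ // x < (q:ℝ)} => f ⁻¹' Iic ((q:ℚ):ℝ)) := by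
      intro q1 q2
      refine ⟨⟨min q1.1 q2.1, by push_cast; exact lt_min q1.2 q2.2⟩, ?_, ?_⟩
      · intro y hy
        simp only [mem_preimage, mem_Iic] at hy ⊢
        exact le_trans hy (by exact_mod_cast min_le_left q1.1 q2.1)
      · intro y hy
        simp only [mem_preimage, mem_Iic] at hy ⊢
        exact le_trans hy (by exact_mod_cast min_le_right q1.1 q2.1)
    have hdir2 : Directed (· ⊇ ·)
        (fun q : {q : ℚ // x < (q:ℝ)} => f ⁻¹' Iic ((q:ℚ):ℝ) ∩ B) := by
      intro q1 q2
      obtain ⟨q3, h1, h2⟩ := hdir q1 q2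
      exact ⟨q3, inter_subset_inter_left _ h1, inter_subset_inter_left _ h2⟩
    have hinter2 : f ⁻¹' Iic x ∩ B = ⋂ q : {q : ℚ // x < (q:ℝ)}, (f ⁻¹' Iic ((q:ℚ):ℝ) ∩ B) := by
      rw [hinter1, iInter_inter]
    rw [hinter2, hinter1]
    rw [hdir2.measure_iInter
      (fun q => ((hf measurableSet_Iic).inter hBmeas).nullMeasurableSet)
      ⟨Classical.arbitrary _, measure_ne_top _ _⟩,
      hdir.measure_iInter
      (fun q => (hf measurableSet_Iic).nullMeasurableSet)
      ⟨Classical.arbitrary _, measure_ne_top _ _⟩]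
    rw [ENNReal.iInf_mul (fun h' => absurd h' (measure_ne_top _ _))]
    exact iInf_congr fun q => hω q.1
  -- pointwise conclusion
  have hint_ind : Integrable (B.indicator f) P := hfi.indicator hBmeas
  filter_upwards [hx, condExp_ae_eq_integral_condExpKernel hm hint_ind,
    condExp_ae_eq_integral_condExpKernel hm hfi,
    condExpKernel_ae_eq_condExp hm hBmeas] with ω hω h1 h2 h3
  rw [h1, h2, ← h3]
  haveI : IsProbabilityMeasure (condExpKernel P m ω) := inferInstance
  set ν₁ : Measure ℝ := Measure.map f ((condExpKernel P m ω).restrict B) with hν₁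
  set ν₂ : Measure ℝ := (condExpKernel P m ω) B • Measure.map f (condExpKernel P m ω) with hν₂
  haveI : IsFiniteMeasure ν₁ := by
    constructor
    rw [hν₁, Measure.map_apply hf MeasurableSet.univ, preimage_univ, Measure.restrict_apply_univ]
    exact measure_lt_top _ _
  have hνeq : ν₁ = ν₂ := by
    refine Measure.ext_of_Iic ν₁ ν₂ fun x => ?_
    rw [hν₁, hν₂, Measure.map_apply hf measurableSet_Iic,
      Measure.restrict_apply (hf measurableSet_Iic), Measure.smul_apply,
      Measure.map_apply hf measurableSet_Iic, smul_eq_mul, hω x, mul_comm]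
  have hmap1 : ∫ y, y ∂ν₁ = ∫ x, f x ∂((condExpKernel P m ω).restrict B) :=
    integral_map hf.aemeasurable aestronglyMeasurable_id
  have hmap2 : ∫ y, y ∂(Measure.map f (condExpKernel P m ω))
      = ∫ y, f y ∂(condExpKernel P m ω) :=
    integral_map hf.aemeasurable aestronglyMeasurable_id
  calc ∫ y, B.indicator f y ∂(condExpKernel P m ω)
      = ∫ x in B, f x ∂(condExpKernel P m ω) := integral_indicator hBmeas
    _ = ∫ y, y ∂ν₁ := hmap1.symm
    _ = ∫ y, y ∂ν₂ := by rw [hνeq]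
    _ = ((condExpKernel P m ω) B).toReal • ∫ y, y ∂(Measure.map f (condExpKernel P m ω)) := by
        rw [hν₂]; exact integral_smul_measure _ _
    _ = (∫ y, f y ∂(condExpKernel P m ω)) * ((condExpKernel P m ω) B).toReal := by
        rw [hmap2, smul_eq_mul, mul_comm]

lemma aux_main {Ω : Type*} {m0 m1 mΩ : MeasurableSpace Ω} [StandardBorelSpace Ω]
    (hm1 : m1 ≤ mΩ) (hm0 : m0 ≤ m1) (P : Measure Ω) [IsProbabilityMeasure P]
    {A0 A1 : Ω → Bool} (hA1 : Measurable A1)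
    (hA0m1 : Measurable[m1] A0)
    {Y Z : Ω → ℝ} (hZ : Measurable Z) {C : ℝ} (hC : 0 ≤ C) (hZbd : ∀ ω, |Z ω| ≤ C)
    (hcons : ∀ᵐ ω ∂P, A0 ω = true → A1 ω = true → Y ω = Z ω)
    (hexch0 : CondIndepFun m0 (hm0.trans hm1) Z A0 P)
    (hexch1 : CondIndepFun m1 hm1 Z A1 P)
    {g0 g1 : Ω → ℝ}
    (hg0 : g0 =ᵐ[P] P[(fun ω => if A0 ω then (1:ℝ) else 0)|m0])
    (hg1 : g1 =ᵐ[P] P[(fun ω => if A1 ω then (1:ℝ) else 0)|m1])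
    {η : ℝ} (hη : 0 < η) (hpos0 : ∀ᵐ ω ∂P, η ≤ g0 ω) (hpos1 : ∀ᵐ ω ∂P, η ≤ g1 ω) :
    ∫ ω, (if A0 ω then (1:ℝ) else 0) * (if A1 ω then (1:ℝ) else 0) * Y ω
        / (g0 ω * g1 ω) ∂P = ∫ ω, Z ω ∂P := by
  have hm0' : m0 ≤ mΩ := hm0.trans hm1
  haveI : SigmaFinite (P.trim hm1) := (isFiniteMeasure_trim hm1).toSigmaFinite
  haveI : SigmaFinite (P.trim hm0') := (isFiniteMeasure_trim hm0').toSigmaFinite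
  have hA0meas : Measurable A0 := hA0m1.mono hm1 le_rfl
  have hIbool : Measurable (fun b : Bool => if b then (1:ℝ) else 0) := measurable_of_finite _
  have hI0m1 : Measurable[m1] (fun ω => if A0 ω then (1:ℝ) else 0) := hIbool.comp hA0m1
  have hI1meas : Measurable (fun ω => if A1 ω then (1:ℝ) else 0) := hIbool.comp hA1
  have hI0meas : Measurable (fun ω => if A0 ω then (1:ℝ) else 0) := hI0m1.mono hm1 le_rfl
  set G0 : Ω → ℝ := P[(fun ω => if A0 ω then (1:ℝ) else 0)|m0] with hG0def
  set G1 : Ω → ℝ := P[(fun ω => if A1 ω then (1:ℝ) else 0)|m1] with hG1def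
  have hG0pos : ∀ᵐ ω ∂P, η ≤ G0 ω := by
    filter_upwards [hpos0, hg0] with ω h1 h2; rw [← h2]; exact h1
  have hG1pos : ∀ᵐ ω ∂P, η ≤ G1 ω := by
    filter_upwards [hpos1, hg1] with ω h1 h2; rw [← h2]; exact h1
  have hG0sm : StronglyMeasurable[m0] G0 := stronglyMeasurable_condExp
  have hG1sm : StronglyMeasurable[m1] G1 := stronglyMeasurable_condExp
  have hG0m1 : Measurable[m1] G0 := (hG0sm.mono hm0).measurable
  have hG1m1 : Measurable[m1] G1 := hG1sm.measurable
  have hG0meas : Measurable G0 := (hG0m1.mono hm1 le_rfl)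
  have hG1meas : Measurable G1 := (hG1m1.mono hm1 le_rfl)
  have intZ : Integrable Z P := aux_integrable_of_bdd hZ.aestronglyMeasurable (ae_of_all _ hZbd)
  have hI1abs : ∀ ω, |(if A1 ω then (1:ℝ) else 0)| ≤ 1 := by
    intro ω; by_cases h : A1 ω = true <;> simp [h]
  have hI0abs : ∀ ω, |(if A0 ω then (1:ℝ) else 0)| ≤ 1 := by
    intro ω; by_cases h : A0 ω = true <;> simp [h]
  have hZI1abs : ∀ ω, |Z ω * (if A1 ω then (1:ℝ) else 0)| ≤ C := by
    intro ω
    rw [abs_mul]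
    calc |Z ω| * |(if A1 ω then (1:ℝ) else 0)| ≤ C * 1 :=
          mul_le_mul (hZbd ω) (hI1abs ω) (abs_nonneg _) hC
      _ = C := mul_one C
  have hZI0abs : ∀ ω, |Z ω * (if A0 ω then (1:ℝ) else 0)| ≤ C := by
    intro ω
    rw [abs_mul]
    calc |Z ω| * |(if A0 ω then (1:ℝ) else 0)| ≤ C * 1 :=
          mul_le_mul (hZbd ω) (hI0abs ω) (abs_nonneg _) hC
      _ = C := mul_one C
  have intX : Integrable (fun ω => Z ω * (if A1 ω then (1:ℝ) else 0)) P :=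
    aux_integrable_of_bdd (hZ.mul hI1meas).aestronglyMeasurable (ae_of_all _ hZI1abs)
  have intZI0 : Integrable (fun ω => Z ω * (if A0 ω then (1:ℝ) else 0)) P :=
    aux_integrable_of_bdd (hZ.mul hI0meas).aestronglyMeasurable (ae_of_all _ hZI0abs)
  have hWm1 : Measurable[m1] (fun ω => (if A0 ω then (1:ℝ) else 0) / (G0 ω * G1 ω)) :=
    hI0m1.div (hG0m1.mul hG1m1)
  have hWbd : ∀ᵐ ω ∂P, |(if A0 ω then (1:ℝ) else 0) / (G0 ω * G1 ω)| ≤ 1/(η*η) := by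
    filter_upwards [hG0pos, hG1pos] with ω h1 h2
    have h3 : 0 < G0 ω := hη.trans_le h1
    have h4 : 0 < G1 ω := hη.trans_le h2
    rw [abs_div, abs_of_pos (mul_pos h3 h4)]
    exact div_le_div₀ (by norm_num) (hI0abs ω) (by positivity)
      (mul_le_mul h1 h2 hη.le h3.le)
  have intWX : Integrable (fun ω =>
      ((if A0 ω then (1:ℝ) else 0) / (G0 ω * G1 ω)) * (Z ω * (if A1 ω then (1:ℝ) else 0))) P := by
    refine aux_integrable_of_bdd (C := (1/(η*η)) * C)
      (((hWm1.mono hm1 le_rfl).mul (hZ.mul hI1meas)).aestronglyMeasurable) ?_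
    filter_upwards [hWbd] with ω h1
    rw [abs_mul]
    exact mul_le_mul h1 (hZI1abs ω) (abs_nonneg _) (by positivity)
  have hVbd : ∀ᵐ ω ∂P, |(if A0 ω then (1:ℝ) else 0) / G0 ω| ≤ 1/η := by
    filter_upwards [hG0pos] with ω h1
    have h3 : 0 < G0 ω := hη.trans_le h1
    rw [abs_div, abs_of_pos h3]
    exact div_le_div₀ (by norm_num) (hI0abs ω) hη h1
  have intV : Integrable (fun ω => ((if A0 ω then (1:ℝ) else 0) / G0 ω) * Z ω) P := by
    refine aux_integrable_of_bdd (C := (1/η) * C)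
      (((hI0meas.div hG0meas).mul hZ).aestronglyMeasurable) ?_
    filter_upwards [hVbd] with ω h1
    rw [abs_mul]
    exact mul_le_mul h1 (hZbd ω) (abs_nonneg _) (by positivity)
  have hUbd : ∀ᵐ ω ∂P, |1 / G0 ω| ≤ 1/η := by
    filter_upwards [hG0pos] with ω h1
    have h3 : 0 < G0 ω := hη.trans_le h1
    rw [abs_div, abs_of_pos h3, abs_one]
    exact div_le_div₀ (by norm_num) le_rfl hη h1
  have intU : Integrable (fun ω => (1 / G0 ω) * (Z ω * (if A0 ω then (1:ℝ) else 0))) P := by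
    refine aux_integrable_of_bdd (C := (1/η) * C)
      (((measurable_const.div hG0meas).mul (hZ.mul hI0meas)).aestronglyMeasurable) ?_
    filter_upwards [hUbd] with ω h1
    rw [abs_mul]
    exact mul_le_mul h1 (hZI0abs ω) (abs_nonneg _) (by positivity)
  have key1 := aux_key_mul_condexp hm1 P hZ intZ hA1 hexch1
  rw [← hG1def] at key1
  have key0 := aux_key_mul_condexp hm0' P hZ intZ hA0meas hexch0
  rw [← hG0def] at key0
  have e1 : ∀ᵐ ω ∂P, (if A0 ω then (1:ℝ) else 0) * (if A1 ω then (1:ℝ) else 0) * Y ω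
      / (g0 ω * g1 ω)
      = ((if A0 ω then (1:ℝ) else 0) / (G0 ω * G1 ω)) * (Z ω * (if A1 ω then (1:ℝ) else 0)) := by
    filter_upwards [hg0, hg1, hcons] with ω h1 h2 h3
    rw [h1, h2]
    by_cases h0 : A0 ω = true
    · by_cases h4 : A1 ω = true
      · rw [h3 h0 h4]; simp only [h0, h4, if_true]; ring
      · simp [h0, h4]
    · simp [h0]
  calc ∫ ω, (if A0 ω then (1:ℝ) else 0) * (if A1 ω then (1:ℝ) else 0) * Y ω
        / (g0 ω * g1 ω) ∂P
      = ∫ ω, ((if A0 ω then (1:ℝ) else 0) / (G0 ω * G1 ω))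
          * (Z ω * (if A1 ω then (1:ℝ) else 0)) ∂P := integral_congr_ae e1
    _ = ∫ ω, ((if A0 ω then (1:ℝ) else 0) / (G0 ω * G1 ω))
          * (P[fun ω' => Z ω' * (if A1 ω' then (1:ℝ) else 0)|m1]) ω ∂P :=
        aux_integral_mul_condexp hm1 P hWm1.stronglyMeasurable intWX intX
    _ = ∫ ω, ((if A0 ω then (1:ℝ) else 0) / G0 ω) * (P[Z|m1]) ω ∂P := by
        refine integral_congr_ae ?_
        filter_upwards [key1, hG0pos, hG1pos] with ω h1 h2 h3
        rw [h1]
        have hg0ne : G0 ω ≠ 0 := (hη.trans_le h2).ne'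
        have hg1ne : G1 ω ≠ 0 := (hη.trans_le h3).ne'
        field_simp
    _ = ∫ ω, ((if A0 ω then (1:ℝ) else 0) / G0 ω) * Z ω ∂P :=
        (aux_integral_mul_condexp hm1 P (hI0m1.div hG0m1).stronglyMeasurable intV intZ).symm
    _ = ∫ ω, (1 / G0 ω) * (Z ω * (if A0 ω then (1:ℝ) else 0)) ∂P := by
        refine integral_congr_ae (ae_of_all _ fun ω => ?_)
        ring
    _ = ∫ ω, (1 / G0 ω) * (P[fun ω' => Z ω' * (if A0 ω' then (1:ℝ) else 0)|m0]) ω ∂P :=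
        aux_integral_mul_condexp hm0' P
          ((measurable_const.div hG0sm.measurable).stronglyMeasurable) intU intZI0
    _ = ∫ ω, (P[Z|m0]) ω ∂P := by
        refine integral_congr_ae ?_
        filter_upwards [key0, hG0pos] with ω h1 h2
        rw [h1]
        have hg0ne : G0 ω ≠ 0 := (hη.trans_le h2).ne'
        field_simp
    _ = ∫ ω, Z ω ∂P := integral_condExp hm0'

/-- Two-period longitudinal inverse probability weighting identification:
`E[1_{A₀=1} · 1_{A₁=1} · Y / (g₀ · g₁)] = E[Y¹¹]`. -/
theorem longitudinal_ipw_identification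
    {Ω S₀ S₁ : Type*} [MeasurableSpace Ω] [StandardBorelSpace Ω] [Nonempty Ω]
    [MeasurableSpace S₀] [StandardBorelSpace S₀]
    [MeasurableSpace S₁] [StandardBorelSpace S₁]
    (P : Measure Ω) [IsProbabilityMeasure P]
    (L0 : Ω → S₀) (hL0 : Measurable L0)
    (A0 : Ω → Bool) (hA0 : Measurable A0)
    (L1 : Ω → S₁) (hL1 : Measurable L1)
    (A1 : Ω → Bool) (hA1 : Measurable A1)
    (Y : Ω → ℝ) (hY : Measurable Y)
    -- potential covariate at time 1 under treatment at time 0,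
    -- and potential outcome under treatment at both times
    (L1p : Ω → S₁) (hL1p : Measurable L1p)
    (Y11 : Ω → ℝ) (hY11 : Measurable Y11)
    (hYbdd : ∃ B : ℝ, ∀ᵐ ω ∂P, |Y ω| ≤ B)
    (hY11bdd : ∃ B : ℝ, ∀ᵐ ω ∂P, |Y11 ω| ≤ B)
    -- consistency
    (hconsL : ∀ᵐ ω ∂P, A0 ω = true → L1 ω = L1p ω)
    (hconsY : ∀ᵐ ω ∂P, A0 ω = true → A1 ω = true → Y ω = Y11 ω)
    -- sequential exchangeability: (L₁¹, Y¹¹) ⫫ A₀ | σ(L₀) and Y¹¹ ⫫ A₁ | σ(L₀, A₀, L₁)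
    (hexch0 : CondIndepFun (MeasurableSpace.comap L0 inferInstance) hL0.comap_le
      (fun ω => (L1p ω, Y11 ω)) A0 P)
    (hexch1 : CondIndepFun
      (MeasurableSpace.comap (fun ω => (L0 ω, A0 ω, L1 ω)) inferInstance)
      (hL0.prodMk (hA0.prodMk hL1)).comap_le Y11 A1 P)
    -- propensities: g₀ is a version of E[1_{A₀=1} | σ(L₀)],
    -- g₁ a version of E[1_{A₁=1} | σ(L₀, A₀, L₁)]
    (g0 g1 : Ω → ℝ)
    (hg0 : g0 =ᵐ[P]
      P[(fun ω => if A0 ω then (1 : ℝ) else 0) | MeasurableSpace.comap L0 inferInstance])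
    (hg1 : g1 =ᵐ[P]
      P[(fun ω => if A1 ω then (1 : ℝ) else 0) |
        MeasurableSpace.comap (fun ω => (L0 ω, A0 ω, L1 ω)) inferInstance])
    -- positivity
    (η : ℝ) (hη : 0 < η) (hpos0 : ∀ᵐ ω ∂P, η ≤ g0 ω) (hpos1 : ∀ᵐ ω ∂P, η ≤ g1 ω) :
    ∫ ω, (if A0 ω then (1 : ℝ) else 0) * (if A1 ω then (1 : ℝ) else 0) * Y ω
        / (g0 ω * g1 ω) ∂P = ∫ ω, Y11 ω ∂P := by
  obtain ⟨B0, hB0⟩ := hY11bdd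
  have hCnn : (0:ℝ) ≤ |B0| := abs_nonneg B0
  have hclampm : Measurable (fun x : ℝ => max (-|B0|) (min |B0| x)) :=
    measurable_const.max (measurable_const.min measurable_id)
  have hZm : Measurable (fun ω => max (-|B0|) (min |B0| (Y11 ω))) := hclampm.comp hY11
  have hZbd : ∀ ω, |max (-|B0|) (min |B0| (Y11 ω))| ≤ |B0| := by
    intro ω
    rw [abs_le]
    exact ⟨le_max_left _ _,
      max_le (le_trans (neg_nonpos.mpr hCnn) hCnn) (min_le_left _ _)⟩
  have hZY : (fun ω => max (-|B0|) (min |B0| (Y11 ω))) =ᵐ[P] Y11 := by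
    filter_upwards [hB0] with ω h
    have h' : |Y11 ω| ≤ |B0| := h.trans (le_abs_self B0)
    rw [abs_le] at h'
    rw [min_eq_right h'.2, max_eq_right h'.1]
  have hT : Measurable[MeasurableSpace.comap (fun ω => (L0 ω, A0 ω, L1 ω)) inferInstance]
      (fun ω => (L0 ω, A0 ω, L1 ω)) := Measurable.of_comap_le le_rfl
  have hm0 : MeasurableSpace.comap L0 inferInstance
      ≤ MeasurableSpace.comap (fun ω => (L0 ω, A0 ω, L1 ω)) inferInstance := by
    have hL0m1 : Measurable[MeasurableSpace.comap (fun ω => (L0 ω, A0 ω, L1 ω)) inferInstance]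
        L0 := measurable_fst.comp hT
    exact hL0m1.comap_le
  have hA0m1 : Measurable[MeasurableSpace.comap (fun ω => (L0 ω, A0 ω, L1 ω)) inferInstance]
      A0 := (measurable_fst.comp measurable_snd).comp hT
  have hexch1' : CondIndepFun
      (MeasurableSpace.comap (fun ω => (L0 ω, A0 ω, L1 ω)) inferInstance)
      (hL0.prodMk (hA0.prodMk hL1)).comap_le
      (fun ω => max (-|B0|) (min |B0| (Y11 ω))) A1 P := by
    have h := hexch1.comp hclampm (measurable_id (α := Bool))
    exact h
  have hexch0' : CondIndepFun (MeasurableSpace.comap L0 inferInstance)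
      (hm0.trans (hL0.prodMk (hA0.prodMk hL1)).comap_le)
      (fun ω => max (-|B0|) (min |B0| (Y11 ω))) A0 P := by
    have h := hexch0.comp (hclampm.comp (measurable_snd (α := S₁) (β := ℝ)))
      (measurable_id (α := Bool))
    exact h
  have hcons : ∀ᵐ ω ∂P, A0 ω = true → A1 ω = true
      → Y ω = max (-|B0|) (min |B0| (Y11 ω)) := by
    filter_upwards [hconsY, hZY] with ω h1 h2
    intro ha hb
    rw [h1 ha hb]
    exact h2.symm
  rw [aux_main (hL0.prodMk (hA0.prodMk hL1)).comap_le hm0 P hA1 hA0m1 hZm hCnn hZbd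
    hcons hexch0' hexch1' hg0 hg1 hη hpos0 hpos1]
  exact integral_congr_ae hZY
end

section
/- Let (Lᵢ, Aᵢ, Yᵢ, Yᵢ¹)_{i ≥ 1} be an i.i.d. sequence of random elements on a probability space (Ω, ℱ, P), each copy satisfying the point-treatment causal setup with a fixed measurable propensity function e : S → ℝ, i.e. e ∘ L₁ is a version of E[1_{A₁=1} | σ(L₁)], with η ≤ e(x) ≤ 1 for all x ∈ S and some η > 0; Y₁ = Y₁¹ P-almost surely on {A₁ = 1}; Y₁¹ and A₁ conditionally independent given σ(L₁); and Y₁, Y₁¹ P-almost surely bounded. Then the Hájek inverse probability weighting estimator is strongly consistent: P-almost surely, (Σ_{i=1}^{n} 1_{Aᵢ=1} Yᵢ / e(Lᵢ)) / (Σ_{i=1}^{n} 1_{Aᵢ=1} / e(Lᵢ)) → E[Y₁¹] as n → ∞. -/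
open MeasureTheory ProbabilityTheory Filter

/-- The σ-algebra generated by a random element. -/
abbrev sigmaAlgOf {Ω S : Type*} [MeasurableSpace S] (f : Ω → S) : MeasurableSpace Ω :=
  MeasurableSpace.comap f inferInstance

lemma measurable_sigmaAlgOf {Ω S : Type*} [MeasurableSpace S] (f : Ω → S) :
    Measurable[sigmaAlgOf f] f := fun s hs => ⟨s, hs, rfl⟩

/-- Strong consistency of the Hájek inverse probability weighting estimator: for an
i.i.d. sequence `(Lᵢ, Aᵢ, Yᵢ, Yᵢ¹)` satisfying the point-treatment causal setup with a
known propensity function `e` bounded in `[η, 1]`, the ratio of the sum of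
inverse-propensity-weighted observed outcomes of the treated to the sum of their weights
converges almost surely to `E[Y¹]`. -/
theorem hajek_ipw_strongly_consistent
    {Ω S : Type*} [MeasurableSpace Ω] [StandardBorelSpace Ω] [Nonempty Ω]
    [MeasurableSpace S] [StandardBorelSpace S]
    (P : Measure Ω) [IsProbabilityMeasure P]
    (L : ℕ → Ω → S) (A : ℕ → Ω → Bool) (Y Y1 : ℕ → Ω → ℝ)
    (hL : ∀ i, Measurable (L i)) (hA : ∀ i, Measurable (A i))
    (hY : ∀ i, Measurable (Y i)) (hY1 : ∀ i, Measurable (Y1 i))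
    -- i.i.d.: the quadruples are independent and identically distributed
    (hindep : iIndepFun
      (fun i ω => (L i ω, A i ω, Y i ω, Y1 i ω)) P)
    (hident : ∀ i, IdentDistrib (fun ω => (L i ω, A i ω, Y i ω, Y1 i ω))
      (fun ω => (L 0 ω, A 0 ω, Y 0 ω, Y1 0 ω)) P P)
    -- known propensity function, bounded in [η, 1]
    (e : S → ℝ) (he_meas : Measurable e)
    (η : ℝ) (hη : 0 < η) (he_lb : ∀ x, η ≤ e x) (he_ub : ∀ x, e x ≤ 1)
    (he : (fun ω => e (L 0 ω)) =ᵐ[P]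
      P[(fun ω => if A 0 ω then (1 : ℝ) else 0) |
        MeasurableSpace.comap (L 0) inferInstance])
    -- consistency: Y = Y¹ a.s. on {A = 1}
    (hcons : ∀ᵐ ω ∂P, A 0 ω = true → Y 0 ω = Y1 0 ω)
    -- exchangeability: Y¹ ⫫ A | σ(L)
    (hexch : CondIndepFun (MeasurableSpace.comap (L 0) inferInstance)
      (hL 0).comap_le (Y1 0) (A 0) P)
    -- boundedness
    (hYbdd : ∃ B : ℝ, ∀ᵐ ω ∂P, |Y 0 ω| ≤ B)
    (hY1bdd : ∃ B : ℝ, ∀ᵐ ω ∂P, |Y1 0 ω| ≤ B) :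
    ∀ᵐ ω ∂P, Tendsto (fun n : ℕ =>
        (∑ i ∈ Finset.range n, (if A i ω then (1 : ℝ) else 0) * Y i ω / e (L i ω)) /
        (∑ i ∈ Finset.range n, (if A i ω then (1 : ℝ) else 0) / e (L i ω)))
      atTop (nhds (∫ ω, Y1 0 ω ∂P)) := by
  classical
  obtain ⟨B, hB⟩ := hYbdd
  have hm := (hL 0).comap_le
  have hepos : ∀ x, 0 < e x := fun x => lt_of_lt_of_le hη (he_lb x)
  have he0 : ∀ x, e x ≠ 0 := fun x => (hepos x).ne'
  set a : Ω → ℝ := fun ω => if A 0 ω then (1 : ℝ) else 0 with ha_def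
  have ha_meas : Measurable a := by
    have h : a = (fun b : Bool => if b then (1:ℝ) else 0) ∘ A 0 := rfl
    rw [h]; exact Measurable.of_discrete.comp (hA 0)
  have ha_nonneg : ∀ ω, 0 ≤ a ω := by
    intro ω; by_cases h : A 0 ω <;> simp [ha_def, h]
  have ha_le : ∀ ω, a ω ≤ 1 := by
    intro ω; by_cases h : A 0 ω <;> simp [ha_def, h]
  have heL_meas : Measurable fun ω => e (L 0 ω) := he_meas.comp (hL 0)
  -- the inverse propensity weight
  set w : Ω → ℝ := fun ω => (e (L 0 ω))⁻¹ with hw_def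
  have hw_meas : Measurable w := heL_meas.inv
  have hLm : Measurable[sigmaAlgOf (L 0)] (L 0) := measurable_sigmaAlgOf (L 0)
  have hw_sm : StronglyMeasurable[sigmaAlgOf (L 0)] w :=
    ((he_meas.comp hLm).inv).stronglyMeasurable
  have hw_nonneg : ∀ ω, 0 ≤ w ω := fun ω => inv_nonneg.2 (hepos _).le
  have hw_le : ∀ ω, w ω ≤ η⁻¹ := fun ω => inv_anti₀ hη (he_lb _)
  have hηinv_nonneg : (0:ℝ) ≤ η⁻¹ := inv_nonneg.2 hη.le
  -- boundedness ⇒ integrability helper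
  have hbdd_int : ∀ (f : Ω → ℝ) (C : ℝ), Measurable f → (∀ᵐ ω ∂P, |f ω| ≤ C) →
      Integrable f P := by
    intro f C hf h
    exact (integrable_const (μ := P) C).mono' hf.aestronglyMeasurable
      (h.mono fun ω hω => by simpa using hω)
  -- the key identification integral
  have key : ∀ B' : Set ℝ, MeasurableSet B' →
      ∫ ω, Set.indicator (Y1 0 ⁻¹' B') (fun _ => (1:ℝ)) ω * (a ω / e (L 0 ω)) ∂P
        = (P (Y1 0 ⁻¹' B')).toReal := by
    intro B' hB'
    set X : Set Ω := Y1 0 ⁻¹' B' with hX_def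
    set T : Set Ω := A 0 ⁻¹' {true} with hT_def
    have hXmeas : MeasurableSet X := (hY1 0) hB'
    have hTmeas : MeasurableSet T := (hA 0) .of_discrete
    have haT : a = Set.indicator T fun _ => (1:ℝ) := by
      funext ω
      by_cases h : A 0 ω <;> simp [ha_def, hT_def, Set.indicator, h]
    have hprod : (fun ω => Set.indicator X (fun _ => (1:ℝ)) ω * (a ω / e (L 0 ω)))
        = fun ω => w ω * Set.indicator (X ∩ T) (fun _ => (1:ℝ)) ω := by
      funext ω
      by_cases hx : ω ∈ X <;> by_cases ht : ω ∈ T <;>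
        simp [haT, hx, ht, Set.indicator, Set.mem_inter_iff, div_eq_mul_inv, hw_def,
          mul_comm]
    have hind_meas : Measurable (Set.indicator (X ∩ T) fun _ => (1:ℝ)) :=
      measurable_const.indicator (hXmeas.inter hTmeas)
    have hind_int : Integrable (Set.indicator (X ∩ T) fun _ => (1:ℝ)) P := by
      refine hbdd_int _ 1 hind_meas (Filter.Eventually.of_forall fun ω => ?_)
      by_cases h : ω ∈ X ∩ T <;> simp [Set.indicator, h]
    have hwind_int : Integrable (w * Set.indicator (X ∩ T) fun _ => (1:ℝ)) P := by
      refine hbdd_int _ η⁻¹ (hw_meas.mul hind_meas)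
        (Filter.Eventually.of_forall fun ω => ?_)
      by_cases h : ω ∈ X ∩ T <;>
        simp [Set.indicator, h, abs_of_nonneg (hw_nonneg ω), hw_le ω, hηinv_nonneg]
    -- conditional independence gives factorization of the conditional expectation
    have hcond := (condIndepFun_iff_condExp_inter_preimage_eq_mul (μ := P)
      (hY1 0) (hA 0)).mp hexch B' {true} hB' .of_discrete
    have hT_ae : (P⟦T | sigmaAlgOf (L 0)⟧) =ᵐ[P] fun ω => e (L 0 ω) := by
      have h : (P⟦T | sigmaAlgOf (L 0)⟧) = P[a | sigmaAlgOf (L 0)] := by rw [haT]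
      rw [h]; exact he.symm
    calc
      ∫ ω, Set.indicator X (fun _ => (1:ℝ)) ω * (a ω / e (L 0 ω)) ∂P
          = ∫ ω, (w * Set.indicator (X ∩ T) fun _ => (1:ℝ)) ω ∂P := by
            rw [hprod]; rfl
      _ = ∫ ω, (P[(w * Set.indicator (X ∩ T) fun _ => (1:ℝ)) | sigmaAlgOf (L 0)]) ω ∂P :=
            (integral_condExp hm).symm
      _ = ∫ ω, w ω * (P⟦X ∩ T | sigmaAlgOf (L 0)⟧) ω ∂P := by
            refine integral_congr_ae ?_
            exact condExp_mul_of_stronglyMeasurable_left hw_sm hwind_int hind_int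
      _ = ∫ ω, (P⟦X | sigmaAlgOf (L 0)⟧) ω ∂P := by
            refine integral_congr_ae ?_
            filter_upwards [hcond, hT_ae] with ω h1 h2
            have hne := he0 (L 0 ω)
            have h1' : (P⟦X ∩ T | sigmaAlgOf (L 0)⟧) ω
                = (P⟦X | sigmaAlgOf (L 0)⟧) ω * (P⟦T | sigmaAlgOf (L 0)⟧) ω := h1
            simp only [h1', h2, hw_def]
            rw [mul_comm ((P⟦X | sigmaAlgOf (L 0)⟧) ω) (e (L 0 ω)), ← mul_assoc,
              inv_mul_cancel₀ hne, one_mul]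
      _ = ∫ ω, Set.indicator X (fun _ => (1:ℝ)) ω ∂P := integral_condExp hm
      _ = (P X).toReal := integral_indicator_one hXmeas
  -- the basic weight integrals
  have hg_nonneg : ∀ ω, 0 ≤ a ω / e (L 0 ω) := fun ω =>
    div_nonneg (ha_nonneg ω) (hepos _).le
  have hg_meas : Measurable fun ω => a ω / e (L 0 ω) := ha_meas.div heL_meas
  have hg_bdd : ∀ ω, |a ω / e (L 0 ω)| ≤ η⁻¹ := by
    intro ω
    rw [abs_of_nonneg (hg_nonneg ω), div_eq_mul_inv]
    calc a ω * (e (L 0 ω))⁻¹ ≤ 1 * η⁻¹ :=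
          mul_le_mul (ha_le ω) (hw_le ω) (hw_nonneg ω) zero_le_one
      _ = η⁻¹ := one_mul _
  have hg_int : Integrable (fun ω => a ω / e (L 0 ω)) P :=
    hbdd_int _ η⁻¹ hg_meas (Filter.Eventually.of_forall hg_bdd)
  -- E[a/e(L)] = 1
  have hint_g : ∫ ω, a ω / e (L 0 ω) ∂P = 1 := by
    have h := key Set.univ MeasurableSet.univ
    simpa [Set.indicator_univ] using h
  -- the measure `P.withDensity (a/e)` agrees with `P` on σ(Y1)
  have hmY := (hY1 0).comap_le
  set g : Ω → NNReal := fun ω => Real.toNNReal (a ω / e (L 0 ω)) with hg_def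
  have hgm : Measurable g := hg_meas.real_toNNReal
  set Q : Measure Ω := P.withDensity fun ω => (g ω : ENNReal) with hQ_def
  have hQapp : ∀ B' : Set ℝ, MeasurableSet B' → Q (Y1 0 ⁻¹' B') = P (Y1 0 ⁻¹' B') := by
    intro B' hB'
    have hX : MeasurableSet (Y1 0 ⁻¹' B') := (hY1 0) hB'
    rw [hQ_def, withDensity_apply _ hX]
    have hcoe : ∀ ω, ((g ω : ENNReal)) = ENNReal.ofReal (a ω / e (L 0 ω)) := fun ω => rfl
    have h1 : ∫⁻ ω in Y1 0 ⁻¹' B', (g ω : ENNReal) ∂P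
        = ENNReal.ofReal (∫ ω in Y1 0 ⁻¹' B', a ω / e (L 0 ω) ∂P) := by
      simp_rw [hcoe]
      exact (ofReal_integral_eq_lintegral_ofReal (hg_int.restrict)
        (Filter.Eventually.of_forall hg_nonneg)).symm
    rw [h1]
    have h2 : ∫ ω in Y1 0 ⁻¹' B', a ω / e (L 0 ω) ∂P
        = ∫ ω, Set.indicator (Y1 0 ⁻¹' B') (fun _ => (1:ℝ)) ω * (a ω / e (L 0 ω)) ∂P := by
      rw [← integral_indicator hX]
      refine integral_congr_ae (Filter.Eventually.of_forall fun ω => ?_)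
      by_cases h : ω ∈ Y1 0 ⁻¹' B' <;> simp [Set.indicator, h]
    rw [h2, key B' hB', ENNReal.ofReal_toReal (measure_ne_top P _)]
  have htrim : Q.trim hmY = P.trim hmY := by
    refine @Measure.ext Ω (sigmaAlgOf (Y1 0)) (Q.trim hmY) (P.trim hmY) fun s hs => ?_
    obtain ⟨B', hB', rfl⟩ := hs
    rw [trim_measurableSet_eq hmY ⟨B', hB', rfl⟩, trim_measurableSet_eq hmY ⟨B', hB', rfl⟩]
    exact hQapp B' hB'
  have hY1mY : StronglyMeasurable[sigmaAlgOf (Y1 0)] (Y1 0) :=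
    (measurable_sigmaAlgOf (Y1 0)).stronglyMeasurable
  -- E[(a/e(L)) Y1] = E[Y1]
  have hint_f1 : ∫ ω, (a ω / e (L 0 ω)) * Y1 0 ω ∂P = ∫ ω, Y1 0 ω ∂P := by
    have h1 : ∫ ω, Y1 0 ω ∂Q = ∫ ω, g ω • Y1 0 ω ∂P :=
      integral_withDensity_eq_integral_smul hgm _
    have h2 : ∫ ω, Y1 0 ω ∂Q = ∫ ω, Y1 0 ω ∂P := by
      have hq : ∫ ω, Y1 0 ω ∂Q = ∫ ω, Y1 0 ω ∂(Q.trim hmY) := integral_trim hmY hY1mY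
      have hp : ∫ ω, Y1 0 ω ∂P = ∫ ω, Y1 0 ω ∂(P.trim hmY) := integral_trim hmY hY1mY
      rw [hq, hp, htrim]
    rw [← h2, h1]
    refine integral_congr_ae (Filter.Eventually.of_forall fun ω => ?_)
    simp [hg_def, NNReal.smul_def, Real.coe_toNNReal _ (hg_nonneg ω)]
  -- define the SLLN sequences
  set F : ℕ → Ω → ℝ := fun i ω => (if A i ω then (1:ℝ) else 0) * Y i ω / e (L i ω)
    with hF_def
  set G : ℕ → Ω → ℝ := fun i ω => (if A i ω then (1:ℝ) else 0) / e (L i ω) with hG_def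
  set φF : S × Bool × ℝ × ℝ → ℝ :=
    fun p => (if p.2.1 then (1:ℝ) else 0) * p.2.2.1 / e p.1 with hφF_def
  set φG : S × Bool × ℝ × ℝ → ℝ := fun p => (if p.2.1 then (1:ℝ) else 0) / e p.1
    with hφG_def
  have hφF_meas : Measurable φF := by
    refine Measurable.div ?_ (he_meas.comp measurable_fst)
    exact (Measurable.comp (Measurable.of_discrete (f := fun b : Bool => if b then (1:ℝ) else 0))
      (measurable_fst.comp measurable_snd)).mul
      (measurable_fst.comp (measurable_snd.comp measurable_snd))
  have hφG_meas : Measurable φG :=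
    (Measurable.comp (Measurable.of_discrete (f := fun b : Bool => if b then (1:ℝ) else 0))
      (measurable_fst.comp measurable_snd)).div (he_meas.comp measurable_fst)
  have hFindep : Pairwise (Function.onFun (IndepFun · · P) F) := fun i j hij =>
    (hindep.indepFun hij).comp hφF_meas hφF_meas
  have hGindep : Pairwise (Function.onFun (IndepFun · · P) G) := fun i j hij =>
    (hindep.indepFun hij).comp hφG_meas hφG_meas
  have hFident : ∀ i, IdentDistrib (F i) (F 0) P P := fun i => (hident i).comp hφF_meas
  have hGident : ∀ i, IdentDistrib (G i) (G 0) P P := fun i => (hident i).comp hφG_meas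
  have hF0_meas : Measurable (F 0) := (ha_meas.mul (hY 0)).div heL_meas
  have hF0eq : ∀ ω, F 0 ω = a ω * Y 0 ω * w ω := fun ω => by
    simp [hF_def, hw_def, ha_def, div_eq_mul_inv]
  have hF0_int : Integrable (F 0) P := by
    refine hbdd_int _ (|B| * η⁻¹) hF0_meas ?_
    filter_upwards [hB] with ω hω
    rw [hF0eq ω, abs_mul, abs_mul, abs_of_nonneg (ha_nonneg ω), abs_of_nonneg (hw_nonneg ω)]
    calc a ω * |Y 0 ω| * w ω ≤ 1 * |B| * η⁻¹ := by
          refine mul_le_mul (mul_le_mul (ha_le ω) (hω.trans (le_abs_self B))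
            (abs_nonneg _) zero_le_one) (hw_le ω) (hw_nonneg ω) ?_
          positivity
      _ = |B| * η⁻¹ := by ring
  have hG0_int : Integrable (G 0) P := hg_int
  -- identify the means
  have hF0_mean : ∫ ω, F 0 ω ∂P = ∫ ω, Y1 0 ω ∂P := by
    rw [← hint_f1]
    refine integral_congr_ae ?_
    filter_upwards [hcons] with ω hω
    by_cases h : A 0 ω
    · simp [hF_def, ha_def, h, hω h, div_eq_mul_inv, mul_comm, mul_left_comm, mul_assoc]
    · simp [hF_def, ha_def, h]
  have hG0_mean : ∫ ω, G 0 ω ∂P = 1 := hint_g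
  -- strong law of large numbers
  have hFslln := strong_law_ae_real F hF0_int hFindep hFident
  have hGslln := strong_law_ae_real G hG0_int hGindep hGident
  rw [hF0_mean] at hFslln
  rw [hG0_mean] at hGslln
  filter_upwards [hFslln, hGslln] with ω h1 h2
  have h3 := h1.div h2 one_ne_zero
  rw [div_one] at h3
  refine Tendsto.congr' ?_ h3
  filter_upwards [eventually_ge_atTop 1] with n hn
  have hn' : (n : ℝ) ≠ 0 := Nat.cast_ne_zero.2 (by omega)
  simp only [Pi.div_apply]
  rw [div_div_div_comm, div_self hn', div_one]
end
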